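/- arXiv:2403.02658 — 5 statements merged into one kernel-verified Lean document; each statement's English description precedes it below -/
import Mathlib

section
/- Fix $C>0$. Let $(X,\mathcal{A})$ be a measurable space, $S_n:X\to[0,Cn]$ measurable functions for $n\in\mathbb{N}_0$, $\lambda:(0,\infty)\to[0,\infty)$ with $\lambda(t)\to0$ as $t\to\infty$, and $\nu_t$ ($t>0$) non-zero finite measures on $X$. Then for any $q>0$, as $t\to\infty$, $\sum_{n=0}^\infty e^{-nq/t}\int_X \exp(-\lambda(t)S_n)\,d\nu_t \sim t\int_0^\infty e^{-qu}\int_X \exp(-\lambda(t)S_{[ut]})\,d\nu_t\,du$. -/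
open MeasureTheory Filter Real Set
open scoped Topology

lemma intexp (a b : ℝ) (q : ℝ) (hq : 0 < q) : ∫ u in a..b, Real.exp (-q*u) = (Real.exp (-q*a) - Real.exp (-q*b))/q := by
  rw [intervalIntegral.integral_comp_mul_left (fun x => Real.exp x) (neg_ne_zero.mpr hq.ne')]
  rw [integral_exp, smul_eq_mul, eq_div_iff hq.ne']
  field_simp
  ring

lemma key (t q M : ℝ) (ht : 0 < t) (hq : 0 < q) (g : ℕ → ℝ)
    (hg0 : ∀ n, 0 ≤ g n) (hgM : ∀ n, g n ≤ M) :
    ∫ u in Set.Ioi (0:ℝ), Real.exp (-q*u) * g ⌊u*t⌋₊ =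
      ((1 - Real.exp (-q/t))/q) * ∑' n : ℕ, Real.exp (-(n:ℝ)*q/t) * g n := by
  have hM : 0 ≤ M := le_trans (hg0 0) (hgM 0)
  have hmeas : Measurable (fun u : ℝ => Real.exp (-q*u) * g ⌊u*t⌋₊) :=
    (Real.measurable_exp.comp (measurable_id.const_mul (-q))).mul
      (measurable_from_nat.comp (Nat.measurable_floor.comp (measurable_id.mul_const t)))
  have hint : IntegrableOn (fun u : ℝ => Real.exp (-q*u) * g ⌊u*t⌋₊) (Set.Ioi 0) := by
    apply Integrable.mono' ((exp_neg_integrableOn_Ioi 0 hq).const_mul M)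
      hmeas.aestronglyMeasurable
    filter_upwards with u
    rw [Real.norm_eq_abs, abs_mul, abs_of_pos (Real.exp_pos _), abs_of_nonneg (hg0 _)]
    calc Real.exp (-q*u) * g ⌊u*t⌋₊ ≤ Real.exp (-q*u) * M :=
          mul_le_mul_of_nonneg_left (hgM _) (Real.exp_pos _).le
      _ = M * Real.exp (-q*u) := mul_comm _ _
  have hunion : Set.Ici (0:ℝ) = ⋃ n : ℕ, Set.Ico ((n:ℝ)/t) (((n:ℝ)+1)/t) := by
    ext u
    simp only [Set.mem_Ici, Set.mem_iUnion, Set.mem_Ico]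
    constructor
    · intro hu
      refine ⟨⌊u*t⌋₊, ?_, ?_⟩
      · rw [div_le_iff₀ ht]
        exact Nat.floor_le (by positivity)
      · rw [lt_div_iff₀ ht]
        exact Nat.lt_floor_add_one _
    · rintro ⟨n, h1, _⟩
      exact le_trans (by positivity) h1
  have hdisj : Pairwise (Function.onFun Disjoint
      (fun n : ℕ => Set.Ico ((n:ℝ)/t) (((n:ℝ)+1)/t))) := by
    have h : ∀ m n : ℕ, m < n → Disjoint (Set.Ico ((m:ℝ)/t) (((m:ℝ)+1)/t))
        (Set.Ico ((n:ℝ)/t) (((n:ℝ)+1)/t)) := by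
      intro m n hmn
      apply Set.Ico_disjoint_Ico.mpr
      have : ((m:ℝ)+1)/t ≤ (n:ℝ)/t := by
        gcongr
        exact_mod_cast Nat.succ_le_of_lt hmn
      calc min (((m:ℝ)+1)/t) (((n:ℝ)+1)/t) ≤ ((m:ℝ)+1)/t := min_le_left _ _
        _ ≤ (n:ℝ)/t := this
        _ ≤ max ((m:ℝ)/t) ((n:ℝ)/t) := le_max_right _ _
    intro m n hmn
    rcases lt_or_gt_of_ne hmn with h' | h'
    · exact h m n h'
    · exact (h n m h').symm
  have hfloor : ∀ n : ℕ, ∀ u ∈ Set.Ico ((n:ℝ)/t) (((n:ℝ)+1)/t), ⌊u*t⌋₊ = n := by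
    intro n u hu
    have h1 : (n:ℝ) ≤ u*t := (div_le_iff₀ ht).mp hu.1
    have h2 : u*t < n+1 := (lt_div_iff₀ ht).mp hu.2
    have h0 : 0 ≤ u*t := le_trans (Nat.cast_nonneg n) h1
    rw [Nat.floor_eq_iff h0]
    exact ⟨h1, h2⟩
  calc ∫ u in Set.Ioi (0:ℝ), Real.exp (-q*u) * g ⌊u*t⌋₊
      = ∫ u in Set.Ici (0:ℝ), Real.exp (-q*u) * g ⌊u*t⌋₊ :=
        (integral_Ici_eq_integral_Ioi).symm
    _ = ∑' n : ℕ, ∫ u in Set.Ico ((n:ℝ)/t) (((n:ℝ)+1)/t), Real.exp (-q*u) * g ⌊u*t⌋₊ := by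
        have hint2 : IntegrableOn (fun u : ℝ => Real.exp (-q*u) * g ⌊u*t⌋₊) (Set.Ici 0) :=
          Iff.mpr integrableOn_Ici_iff_integrableOn_Ioi hint
        rw [hunion] at hint2 ⊢
        exact integral_iUnion (fun n => measurableSet_Ico) hdisj hint2
    _ = ∑' n : ℕ, ((1 - Real.exp (-q/t))/q) * (Real.exp (-(n:ℝ)*q/t) * g n) := by
        apply tsum_congr
        intro n
        have hab : (n:ℝ)/t ≤ ((n:ℝ)+1)/t := by gcongr; linarith
        rw [setIntegral_congr_fun measurableSet_Ico
          (g := fun u => Real.exp (-q*u) * g n)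
          (fun u hu => by rw [hfloor n u hu])]
        rw [integral_Ico_eq_integral_Ioo, ← integral_Ioc_eq_integral_Ioo, ← intervalIntegral.integral_of_le hab,
          intervalIntegral.integral_mul_const, intexp _ _ q hq]
        have e1 : -q*(((n:ℝ)+1)/t) = -(n:ℝ)*q/t + (-q/t) := by ring
        have e2 : -q*((n:ℝ)/t) = -(n:ℝ)*q/t := by ring
        rw [e1, e2, Real.exp_add]
        ring
    _ = ((1 - Real.exp (-q/t))/q) * ∑' n : ℕ, Real.exp (-(n:ℝ)*q/t) * g n := tsum_mul_left

lemma limc (q : ℝ) (hq : 0 < q) : Tendsto (fun t : ℝ => t * (1 - Real.exp (-q/t))) atTop (𝓝 q) := by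
  have h1 : Tendsto (fun t : ℝ => -q/t) atTop (𝓝[≠] 0) := by
    rw [tendsto_nhdsWithin_iff]
    refine ⟨Tendsto.div_atTop tendsto_const_nhds tendsto_id, ?_⟩
    filter_upwards [eventually_gt_atTop 0] with t ht
    exact (div_neg_of_neg_of_pos (by linarith) ht).ne
  have h2 : Tendsto (slope Real.exp 0) (𝓝[≠] 0) (𝓝 1) := by
    have := Real.hasDerivAt_exp 0
    rw [hasDerivAt_iff_tendsto_slope] at this
    simpa using this
  have h3 := h2.comp h1
  apply Tendsto.congr' _ (by simpa using h3.const_mul q)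
  filter_upwards [eventually_gt_atTop 0] with t ht
  have hx : -q/t ≠ 0 := (div_neg_of_neg_of_pos (by linarith) ht).ne
  simp only [Function.comp, slope_def_field, Real.exp_zero]
  field_simp [hq.ne']
  ring

lemma ratio_eq (q t e D : ℝ) (hq : 0 < q) (ht : 0 < t) (he : 0 < 1 - e) (hD : 0 < D) :
    D / (t * ((1 - e)/q * D)) = q / (t * (1 - e)) := by
  rw [div_eq_div_iff (by positivity) (by positivity)]
  field_simp


/-- Discretization lemma: the discrete double Laplace transform is asymptotically
equivalent to the continuous one. -/
theorem stmt1 {X : Type*} [MeasurableSpace X] (C : ℝ) (hC : 0 < C)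
    (S : ℕ → X → ℝ) (hSmeas : ∀ n, Measurable (S n))
    (hS : ∀ n x, 0 ≤ S n x ∧ S n x ≤ C * n)
    (lam : ℝ → ℝ) (hlamnn : ∀ t, 0 ≤ lam t) (hlam : Tendsto lam atTop (𝓝 0))
    (ν : ℝ → Measure X) (hν : ∀ t, 0 < t → IsFiniteMeasure (ν t) ∧ ν t ≠ 0)
    (q : ℝ) (hq : 0 < q) :
    Tendsto (fun t =>
      (∑' n : ℕ, Real.exp (-(n : ℝ) * q / t) * ∫ x, Real.exp (-(lam t) * S n x) ∂(ν t)) /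
      (t * ∫ u in Set.Ioi (0:ℝ),
        Real.exp (-q * u) * ∫ x, Real.exp (-(lam t) * S ⌊u * t⌋₊ x) ∂(ν t)))
      atTop (𝓝 1) := by
  have hlim : Tendsto (fun t : ℝ => q / (t * (1 - Real.exp (-q/t)))) atTop (𝓝 1) := by
    have h := (tendsto_const_nhds (x := q) (f := atTop)).div (limc q hq) hq.ne'
    rw [div_self hq.ne'] at h
    exact h
  apply hlim.congr'
  filter_upwards [eventually_gt_atTop 0] with t ht
  haveI : IsFiniteMeasure (ν t) := (hν t ht).1
  set g : ℕ → ℝ := fun n => ∫ x, Real.exp (-(lam t) * S n x) ∂(ν t) with hgdef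
  have hexple : ∀ n x, Real.exp (-(lam t) * S n x) ≤ 1 := by
    intro n x
    rw [← Real.exp_zero]
    apply Real.exp_le_exp.mpr
    have := (hS n x).1
    have := hlamnn t
    nlinarith
  have hintg : ∀ n, Integrable (fun x => Real.exp (-(lam t) * S n x)) (ν t) := by
    intro n
    have hm : Measurable (fun x => Real.exp (-(lam t) * S n x)) :=
      Real.measurable_exp.comp ((hSmeas n).const_mul (-(lam t)))
    apply Integrable.mono' (integrable_const (1:ℝ)) hm.aestronglyMeasurable
    filter_upwards with x
    show ‖Real.exp (-(lam t) * S n x)‖ ≤ 1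
    rw [Real.norm_eq_abs, abs_of_pos (Real.exp_pos _)]
    exact hexple n x
  have hg0 : ∀ n, 0 < g n := by
    intro n
    rw [hgdef]
    rw [integral_pos_iff_support_of_nonneg (fun x => (Real.exp_pos _).le) (hintg n)]
    apply lt_of_lt_of_le (Measure.measure_univ_pos.mpr (hν t ht).2)
    exact measure_mono (fun x _ => (Real.exp_pos _).ne')
  have hgM : ∀ n, g n ≤ (ν t Set.univ).toReal := by
    intro n
    have h := integral_mono (hintg n) (integrable_const (1:ℝ)) (fun x => hexple n x)
    rw [integral_const, smul_eq_mul, mul_one] at h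
    exact h
  have hr1 : Real.exp (-q/t) < 1 := by
    rw [← Real.exp_zero]
    apply Real.exp_lt_exp.mpr
    exact div_neg_of_neg_of_pos (by linarith) ht
  have hexpn : ∀ n : ℕ, Real.exp (-(n:ℝ)*q/t) = Real.exp (-q/t) ^ n := by
    intro n
    rw [← Real.exp_nat_mul]
    congr 1
    ring
  have hsum : Summable (fun n : ℕ => Real.exp (-(n:ℝ)*q/t) * g n) := by
    apply Summable.of_nonneg_of_le
      (fun n => mul_nonneg (Real.exp_pos _).le (hg0 n).le)
      (fun n => ?_)
      (((summable_geometric_of_lt_one (Real.exp_pos _).le hr1).mul_left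
        ((ν t Set.univ).toReal)))
    rw [hexpn n]
    calc Real.exp (-q/t) ^ n * g n ≤ Real.exp (-q/t) ^ n * (ν t Set.univ).toReal := by
          apply mul_le_mul_of_nonneg_left (hgM n) (by positivity)
      _ = (ν t Set.univ).toReal * Real.exp (-q/t) ^ n := mul_comm _ _
  have hD : 0 < ∑' n : ℕ, Real.exp (-(n:ℝ)*q/t) * g n := by
    have h0 : (0:ℝ) < Real.exp (-(0:ℕ)*q/t) * g 0 := by
      simpa using hg0 0
    exact lt_of_lt_of_le h0 (Summable.le_tsum hsum 0
      (fun i _ => mul_nonneg (Real.exp_pos _).le (hg0 i).le))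
  have hI := key t q _ ht hq g (fun n => (hg0 n).le) hgM
  have h1e : 0 < 1 - Real.exp (-q/t) := by linarith
  rw [hI]
  exact (ratio_eq q t _ _ hq ht h1e hD).symm
end

section
/- Let $T$ be a conservative ergodic measure-preserving transformation of a $\sigma$-finite space $(X,\mathcal{A},\mu)$ with $\mu(X)=\infty$, $Y\in\mathcal{A}$ with $0<\mu(Y)<\infty$, $\varphi$ the first return time to $Y$, $Y_0=Y$, $Y_n=Y^c\cap\{\varphi=n\}$, and $\hat T$ the transfer operator. For $s_1>0$, $s_2\ge0$, with $Q^Y(s)=\sum_{n\ge0}e^{-ns}\mu(Y\cap\{\varphi>n\})$ and $Z_n^Y(x)=\max\{k\le n:T^kx\in Y\}$, one has $\int_Y \big(\sum_{n\ge0}e^{-ns_1}e^{-s_2 Z_n^Y}\big)\big(\sum_{n\ge0}e^{-n(s_1+s_2)}\hat T^n 1_{Y_n}\big)\,d\mu = Q^Y(s_1)/(1-e^{-(s_1+s_2)})$. -/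
open MeasureTheory Filter Real Set
open scoped Topology ENNReal
open scoped Classical

/-- First return time to `Y` (value `⊤` if the orbit never returns). -/
noncomputable def firstReturn {X : Type*} (T : X → X) (Y : Set X) (x : X) : ℕ∞ :=
  ⨅ (k : ℕ) (_ : 1 ≤ k ∧ T^[k] x ∈ Y), (k : ℕ∞)

/-- The sets `Y₀ = Y`, `Yₙ = Yᶜ ∩ {φ = n}`. -/
noncomputable def Ypart {X : Type*} (T : X → X) (Y : Set X) : ℕ → Set X
  | 0 => Y
  | (n+1) => Yᶜ ∩ {x | firstReturn T Y x = ((n+1 : ℕ) : ℕ∞)}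

/-- Laplace transform `Q^Y(s)` of the increments of the wandering rate. -/
noncomputable def QY {X : Type*} [MeasurableSpace X] (T : X → X) (Y : Set X)
    (μ : Measure X) (s : ℝ) : ℝ≥0∞ :=
  ∑' n : ℕ, ENNReal.ofReal (Real.exp (-(n : ℝ) * s)) *
    μ (Y ∩ {x | (n : ℕ∞) < firstReturn T Y x})

/-- Last visit time to `Y` up to time `n` (with `max ∅ = 0`). -/
noncomputable def lastVisit {X : Type*} (T : X → X) (Y : Set X) (n : ℕ) (x : X) : ℕ :=
  sSup {k | k ≤ n ∧ T^[k] x ∈ Y}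

section Aux

variable {X : Type*} (T : X → X) (Y : Set X)

lemma lt_firstReturn_iff {x : X} {n : ℕ} :
    (n : ℕ∞) < firstReturn T Y x ↔ ∀ k, 1 ≤ k → k ≤ n → T^[k] x ∉ Y := by
  constructor
  · intro h k hk1 hkn hkY
    have hle : firstReturn T Y x ≤ (k : ℕ∞) := iInf₂_le k ⟨hk1, hkY⟩
    have h2 : (n : ℕ∞) < (k : ℕ∞) := lt_of_lt_of_le h hle
    exact absurd (Nat.cast_le.mpr hkn) (not_le.mpr h2)
  · intro h
    have h2 : ((n+1 : ℕ) : ℕ∞) ≤ firstReturn T Y x := by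
      apply le_iInf₂
      intro k hk
      have : n + 1 ≤ k := by
        by_contra hc
        exact h k hk.1 (by omega) hk.2
      exact_mod_cast this
    calc (n:ℕ∞) < ((n+1:ℕ):ℕ∞) := by exact_mod_cast Nat.lt_succ_self n
    _ ≤ _ := h2

lemma firstReturn_pos (x : X) : (0 : ℕ∞) < firstReturn T Y x := by
  have : ((0:ℕ) : ℕ∞) < firstReturn T Y x :=
    (lt_firstReturn_iff T Y).2 (fun k hk1 hk0 _ => by omega)
  simpa using this

lemma firstReturn_eq_iff {x : X} {n : ℕ} :
    firstReturn T Y x = ((n+1 : ℕ) : ℕ∞) ↔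
      T^[n+1] x ∈ Y ∧ ∀ k, 1 ≤ k → k ≤ n → T^[k] x ∉ Y := by
  constructor
  · intro h
    have h1 : ∀ k, 1 ≤ k → k ≤ n → T^[k] x ∉ Y := by
      rw [← lt_firstReturn_iff T Y, h]
      exact_mod_cast Nat.lt_succ_self n
    refine ⟨?_, h1⟩
    by_contra hc
    have h2 : ((n+1:ℕ):ℕ∞) < firstReturn T Y x := by
      rw [lt_firstReturn_iff]
      intro k hk1 hk2 hkY
      rcases Nat.lt_or_ge k (n+1) with h' | h'
      · exact h1 k hk1 (by omega) hkY
      · have hk : k = n+1 := by omega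
        exact hc (hk ▸ hkY)
    rw [h] at h2; exact lt_irrefl _ h2
  · rintro ⟨hY', h1⟩
    refine le_antisymm (iInf₂_le (n+1) ⟨by omega, hY'⟩) ?_
    have h2 : (n : ℕ∞) < firstReturn T Y x := (lt_firstReturn_iff T Y).2 h1
    have h3 : (n : ℕ∞) + 1 ≤ firstReturn T Y x :=
      (ENat.add_one_le_iff (ENat.coe_ne_top n)).2 h2
    calc ((n+1:ℕ):ℕ∞) = (n:ℕ∞) + 1 := by push_cast; rfl
    _ ≤ _ := h3

lemma bddS (x : X) (n : ℕ) : BddAbove {k | k ≤ n ∧ T^[k] x ∈ Y} :=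
  ⟨n, fun _ hk => hk.1⟩

lemma lastVisit_mem {x : X} {n : ℕ} (h : ∃ k, k ≤ n ∧ T^[k] x ∈ Y) :
    lastVisit T Y n x ≤ n ∧ T^[lastVisit T Y n x] x ∈ Y :=
  Nat.sSup_mem h (bddS T Y x n)

lemma le_lastVisit {x : X} {n k : ℕ} (hk : k ≤ n) (hY' : T^[k] x ∈ Y) :
    k ≤ lastVisit T Y n x :=
  le_csSup (bddS T Y x n) ⟨hk, hY'⟩

lemma lastVisit_shift {x : X} {n m : ℕ} (h : T^[n] x ∈ Y) :
    lastVisit T Y (n + m) x = n + lastVisit T Y m (T^[n] x) := by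
  set z := lastVisit T Y m (T^[n] x) with hz
  have h0 : (0:ℕ) ≤ m ∧ T^[0] (T^[n] x) ∈ Y := ⟨Nat.zero_le m, by simpa using h⟩
  have hzmem : z ≤ m ∧ T^[z] (T^[n] x) ∈ Y := lastVisit_mem T Y ⟨0, h0⟩
  have hnz : T^[n + z] x ∈ Y := by
    rw [add_comm, Function.iterate_add_apply]; exact hzmem.2
  have hKmem : lastVisit T Y (n+m) x ≤ n + m ∧ T^[lastVisit T Y (n+m) x] x ∈ Y :=
    lastVisit_mem T Y ⟨n + z, by omega, hnz⟩
  set K := lastVisit T Y (n+m) x with hK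
  have hnK : n ≤ K := le_lastVisit T Y (by omega) h
  have h1 : n + z ≤ K := le_lastVisit T Y (by omega) hnz
  have h2 : K - n ≤ z := by
    apply le_lastVisit T Y (by omega)
    rw [← Function.iterate_add_apply]
    have : K - n + n = K := by omega
    rw [this]; exact hKmem.2
  omega

lemma lastVisit_eq_of {x : X} {j k : ℕ} (hk : k ≤ j) (hY' : T^[k] x ∈ Y)
    (hgt : ∀ l, k < l → l ≤ j → T^[l] x ∉ Y) : lastVisit T Y j x = k := by
  have hKmem := lastVisit_mem T Y ⟨k, hk, hY'⟩
  have h1 : k ≤ lastVisit T Y j x := le_lastVisit T Y hk hY'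
  rcases Nat.lt_or_ge k (lastVisit T Y j x) with h | h
  · exact absurd hKmem.2 (hgt _ h hKmem.1)
  · omega

lemma lastVisit_eq_sup (x : X) (n : ℕ) :
    lastVisit T Y n x = (Finset.range (n+1)).sup (fun k => if T^[k] x ∈ Y then k else 0) := by
  apply le_antisymm
  · by_cases h : ∃ k, k ≤ n ∧ T^[k] x ∈ Y
    · have hm := lastVisit_mem T Y h
      exact le_trans (le_of_eq (if_pos hm.2).symm)
        (Finset.le_sup (f := fun k => if T^[k] x ∈ Y then k else 0)
          (Finset.mem_range.mpr (Nat.lt_succ_of_le hm.1)))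
    · have hS : {k | k ≤ n ∧ T^[k] x ∈ Y} = (∅ : Set ℕ) := by
        ext k; simp only [mem_setOf_eq, mem_empty_iff_false, iff_false]
        intro hk; exact h ⟨k, hk⟩
      rw [lastVisit, hS, csSup_empty]
      exact Nat.zero_le _
  · apply Finset.sup_le
    intro k hk
    by_cases hY' : T^[k] x ∈ Y
    · rw [if_pos hY']
      exact le_lastVisit T Y (by simpa [Nat.lt_succ_iff] using hk) hY'
    · rw [if_neg hY']; exact Nat.zero_le _

variable {mX : MeasurableSpace X}

lemma measurable_gt_firstReturn (hT : Measurable T) (hYm : MeasurableSet Y) (n : ℕ) :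
    MeasurableSet {x | (n : ℕ∞) < firstReturn T Y x} := by
  have : {x | (n : ℕ∞) < firstReturn T Y x}
      = ⋂ k ∈ Set.Icc 1 n, (T^[k]) ⁻¹' Yᶜ := by
    ext x
    simp only [mem_setOf_eq, mem_iInter, Set.mem_Icc, mem_preimage, mem_compl_iff,
      lt_firstReturn_iff]
    constructor
    · intro h k hk; exact h k hk.1 hk.2
    · intro h k h1 h2; exact h k ⟨h1, h2⟩
  rw [this]
  exact MeasurableSet.biInter (Set.to_countable _)
    (fun k _ => (hT.iterate k) hYm.compl)

lemma measurable_eq_firstReturn (hT : Measurable T) (hYm : MeasurableSet Y) (n : ℕ) :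
    MeasurableSet {x | firstReturn T Y x = ((n+1 : ℕ) : ℕ∞)} := by
  have : {x | firstReturn T Y x = ((n+1 : ℕ) : ℕ∞)}
      = (T^[n+1]) ⁻¹' Y ∩ {x | (n : ℕ∞) < firstReturn T Y x} := by
    ext x
    simp only [mem_setOf_eq, mem_inter_iff, mem_preimage, firstReturn_eq_iff,
      lt_firstReturn_iff]
  rw [this]
  exact ((hT.iterate (n+1)) hYm).inter (measurable_gt_firstReturn T Y hT hYm n)

lemma measurable_Ypart (hT : Measurable T) (hYm : MeasurableSet Y) (n : ℕ) :
    MeasurableSet (Ypart T Y n) := by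
  cases n with
  | zero => exact hYm
  | succ m => exact hYm.compl.inter (measurable_eq_firstReturn T Y hT hYm m)

lemma measurable_lastVisit (hT : Measurable T) (hYm : MeasurableSet Y) (n : ℕ) :
    Measurable (fun x => lastVisit T Y n x) := by
  simp only [lastVisit_eq_sup]
  induction (Finset.range (n+1)) using Finset.induction_on with
  | empty => simp only [Finset.sup_empty]; exact measurable_const
  | insert _ _ h ih =>
    simp only [Finset.sup_insert]
    exact (Measurable.ite ((hT.iterate _) hYm) measurable_const measurable_const).max ih

end Aux

section Main

lemma tsum_shift_reindex (c : ℕ → ℕ → ℝ≥0∞) :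
    (∑' n : ℕ, ∑' m : ℕ, c n (n+m)) = ∑' j : ℕ, ∑ n ∈ Finset.range (j+1), c n j := by
  have h1 : ∀ n : ℕ, (∑' m : ℕ, c n (n+m)) = ∑' j : ℕ, (if n ≤ j then c n j else 0) := by
    intro n
    have hsupp : Function.support (fun j => if n ≤ j then c n j else 0)
        ⊆ Set.range (fun m : ℕ => n + m) := by
      intro j hj
      rcases le_or_gt n j with h | h
      · exact ⟨j - n, show n + (j - n) = j by omega⟩
      · exact absurd (if_neg (by omega)) hj
    calc (∑' m : ℕ, c n (n+m))
        = ∑' m : ℕ, (fun j => if n ≤ j then c n j else 0) ((fun m : ℕ => n + m) m) :=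
          tsum_congr fun m => (if_pos (Nat.le_add_right n m)).symm
      _ = ∑' j : ℕ, (if n ≤ j then c n j else 0) :=
          Function.Injective.tsum_eq (add_right_injective n) hsupp
  simp only [h1]
  rw [ENNReal.tsum_comm]
  apply tsum_congr
  intro j
  rw [tsum_eq_sum (s := Finset.range (j+1))
    (fun n hn => if_neg (by simp only [Finset.mem_range] at hn; omega))]
  exact Finset.sum_congr rfl fun n hn =>
    if_pos (by simp only [Finset.mem_range] at hn; omega)

lemma tsum_cauchy_reindex (a b : ℕ → ℝ≥0∞) :
    (∑' j : ℕ, ∑ k ∈ Finset.range (j+1), a k * b (j - k))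
      = (∑' k : ℕ, a k) * (∑' i : ℕ, b i) := by
  have h1 : ∀ j : ℕ, (∑ k ∈ Finset.range (j+1), a k * b (j-k))
      = ∑' k : ℕ, (if k ≤ j then a k * b (j-k) else 0) := by
    intro j
    rw [tsum_eq_sum (s := Finset.range (j+1))
      (fun k hk => if_neg (by simp only [Finset.mem_range] at hk; omega))]
    exact Finset.sum_congr rfl fun k hk =>
      (if_pos (by simp only [Finset.mem_range] at hk; omega)).symm
  calc (∑' j : ℕ, ∑ k ∈ Finset.range (j+1), a k * b (j - k))
      = ∑' j : ℕ, ∑' k : ℕ, (if k ≤ j then a k * b (j-k) else 0) := tsum_congr h1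
    _ = ∑' k : ℕ, ∑' j : ℕ, (if k ≤ j then a k * b (j-k) else 0) := ENNReal.tsum_comm
    _ = ∑' k : ℕ, ∑' i : ℕ, a k * b i := by
        apply tsum_congr
        intro k
        have hsupp : Function.support (fun j => if k ≤ j then a k * b (j-k) else 0)
            ⊆ Set.range (fun i : ℕ => k + i) := by
          intro j hj
          rcases le_or_gt k j with h | h
          · exact ⟨j - k, show k + (j - k) = j by omega⟩
          · exact absurd (if_neg (by omega)) hj
        rw [← Function.Injective.tsum_eq (add_right_injective k) hsupp]
        exact tsum_congr fun i => by
          rw [if_pos (Nat.le_add_right k i), show k + i - k = i from by omega]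
    _ = (∑' k : ℕ, a k) * (∑' i : ℕ, b i) := by
        rw [← ENNReal.tsum_mul_right]
        exact tsum_congr fun k => ENNReal.tsum_mul_left

lemma dual_iter {X : Type*} [MeasurableSpace X] {μ : Measure X} {T : X → X}
    (hT : Measurable T) (hatT : (X → ℝ≥0∞) → (X → ℝ≥0∞))
    (hatTmeas : ∀ u, Measurable u → Measurable (hatT u))
    (hatTdual : ∀ u v : X → ℝ≥0∞, Measurable u → Measurable v →
      ∫⁻ x, v (T x) * u x ∂μ = ∫⁻ x, v x * hatT u x ∂μ) :
    ∀ (n : ℕ) (v u : X → ℝ≥0∞), Measurable v → Measurable u →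
      ∫⁻ x, v (T^[n] x) * u x ∂μ = ∫⁻ x, v x * (hatT^[n] u) x ∂μ := by
  intro n
  induction n with
  | zero => intro v u _ _; simp
  | succ n ih =>
    intro v u hv hu
    have h1 : ∫⁻ x, v (T^[n+1] x) * u x ∂μ
        = ∫⁻ x, (fun y => v (T^[n] y)) (T x) * u x ∂μ :=
      lintegral_congr fun x => by rw [Function.iterate_succ_apply]
    rw [h1, hatTdual u (fun y => v (T^[n] y)) hu (hv.comp (hT.iterate n)),
      ih v (hatT u) hv (hatTmeas u hu)]
    simp only [Function.iterate_succ_apply]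

lemma hatT_iter_meas {X : Type*} [MeasurableSpace X]
    (hatT : (X → ℝ≥0∞) → (X → ℝ≥0∞))
    (hatTmeas : ∀ u, Measurable u → Measurable (hatT u)) :
    ∀ (n : ℕ) (u : X → ℝ≥0∞), Measurable u → Measurable (hatT^[n] u) := by
  intro n
  induction n with
  | zero => intro u hu; simpa using hu
  | succ n ih =>
    intro u hu
    rw [Function.iterate_succ_apply]
    exact ih _ (hatTmeas u hu)

lemma Ypart_zero {X : Type*} (T : X → X) (Y : Set X) : Ypart T Y 0 = Y := rfl

lemma Ypart_succ {X : Type*} (T : X → X) (Y : Set X) (n : ℕ) :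
    Ypart T Y (n+1) = Yᶜ ∩ {x | firstReturn T Y x = ((n+1 : ℕ) : ℕ∞)} := rfl

end Main

/-- Double Laplace transform identity for the waiting time `Z_n^Y`. -/
theorem stmt4 {X : Type*} [MeasurableSpace X] {μ : Measure X} [SigmaFinite μ]
    {T : X → X} (hcons : Conservative T μ) (herg : Ergodic T μ)
    (hinf : μ Set.univ = ⊤) {Y : Set X} (hYm : MeasurableSet Y)
    (hY0 : 0 < μ Y) (hY1 : μ Y < ⊤)
    (hatT : (X → ℝ≥0∞) → (X → ℝ≥0∞))
    (hatTmeas : ∀ u, Measurable u → Measurable (hatT u))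
    (hatTdual : ∀ u v : X → ℝ≥0∞, Measurable u → Measurable v →
      ∫⁻ x, v (T x) * u x ∂μ = ∫⁻ x, v x * hatT u x ∂μ)
    (s1 s2 : ℝ) (hs1 : 0 < s1) (hs2 : 0 ≤ s2) :
    ∫⁻ x in Y,
      (∑' n : ℕ, ENNReal.ofReal (Real.exp (-(n : ℝ) * s1)) *
        ENNReal.ofReal (Real.exp (-s2 * lastVisit T Y n x))) *
      (∑' n : ℕ, ENNReal.ofReal (Real.exp (-(n : ℝ) * (s1 + s2))) *
        (hatT^[n] ((Ypart T Y n).indicator fun _ => (1:ℝ≥0∞))) x) ∂μ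
    = QY T Y μ s1 / (1 - ENNReal.ofReal (Real.exp (-(s1 + s2)))) := by
  classical
  have hT : Measurable T := herg.toMeasurePreserving.measurable
  obtain ⟨r1, hr1⟩ : ∃ a, a = ENNReal.ofReal (Real.exp (-s1)) := ⟨_, rfl⟩
  obtain ⟨r2, hr2⟩ : ∃ a, a = ENNReal.ofReal (Real.exp (-s2)) := ⟨_, rfl⟩
  obtain ⟨r, hrdef⟩ : ∃ a, a = ENNReal.ofReal (Real.exp (-(s1+s2))) := ⟨_, rfl⟩
  have hr : r = r1 * r2 := by
    rw [hr1, hr2, hrdef, show -(s1+s2) = -s1 + -s2 by ring, Real.exp_add,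
      ENNReal.ofReal_mul (exp_nonneg _)]
  have C1 : ∀ (s : ℝ) (n : ℕ), ENNReal.ofReal (Real.exp (-(n:ℝ) * s))
      = ENNReal.ofReal (Real.exp (-s)) ^ n := by
    intro s n
    rw [show -(n:ℝ) * s = (n:ℝ) * (-s) by ring, Real.exp_nat_mul,
      ENNReal.ofReal_pow (exp_nonneg _)]
  have C1' : ∀ n : ℕ, ENNReal.ofReal (Real.exp (-(n:ℝ) * s1)) = r1 ^ n :=
    fun n => by rw [C1 s1 n, ← hr1]
  have C1s : ∀ n : ℕ, ENNReal.ofReal (Real.exp (-(n:ℝ) * (s1+s2))) = r ^ n :=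
    fun n => by rw [C1 (s1+s2) n, ← hrdef]
  have C2 : ∀ k : ℕ, ENNReal.ofReal (Real.exp (-s2 * (k:ℝ))) = r2 ^ k := by
    intro k
    rw [show -s2 * (k:ℝ) = (k:ℝ) * (-s2) by ring, Real.exp_nat_mul,
      ENNReal.ofReal_pow (exp_nonneg _), ← hr2]
  obtain ⟨g, hgdef⟩ : ∃ g : ℕ → X → ℝ≥0∞,
      g = fun j x => r1 ^ j * ENNReal.ofReal (Real.exp (-s2 * (lastVisit T Y j x : ℝ))) :=
    ⟨_, rfl⟩
  obtain ⟨A, hAdef⟩ : ∃ A : X → ℝ≥0∞, A = fun x => ∑' n : ℕ, g n x := ⟨_, rfl⟩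
  obtain ⟨u, hudef⟩ : ∃ u : ℕ → X → ℝ≥0∞,
      u = fun n => (Ypart T Y n).indicator (fun _ => (1:ℝ≥0∞)) := ⟨_, rfl⟩
  have hu' : ∀ n, (Ypart T Y n).indicator (fun _ => (1:ℝ≥0∞)) = u n :=
    fun n => by rw [hudef]
  have hgm : ∀ j, Measurable (g j) := by
    intro j
    rw [hgdef]
    exact ((measurable_from_top (f := fun k : ℕ => ENNReal.ofReal (Real.exp (-s2 * (k:ℝ))))).comp
      (measurable_lastVisit T Y hT hYm j)).const_mul _
  have hAm : Measurable A := by rw [hAdef]; exact Measurable.ennreal_tsum hgm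
  have hum : ∀ n, Measurable (u n) := fun n => by
    rw [hudef]; exact measurable_const.indicator (measurable_Ypart T Y hT hYm n)
  have hiter : ∀ (n : ℕ) (w : X → ℝ≥0∞), Measurable w → Measurable (hatT^[n] w) :=
    hatT_iter_meas hatT hatTmeas
  have hD := dual_iter hT hatT hatTmeas hatTdual
  have hgtm : ∀ i : ℕ, MeasurableSet {y | (i:ℕ∞) < firstReturn T Y y} :=
    measurable_gt_firstReturn T Y hT hYm
  obtain ⟨E, hEdef⟩ : ∃ E : ℕ → ℕ → Set X,
      E = fun j k => T^[k] ⁻¹' (Y ∩ {y | ((j - k : ℕ) : ℕ∞) < firstReturn T Y y}) := ⟨_, rfl⟩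
  have hEm : ∀ j k, MeasurableSet (E j k) := fun j k => by
    rw [hEdef]; exact (hT.iterate k) (hYm.inter (hgtm _))
  have hEμ : ∀ j k, μ (E j k) = μ (Y ∩ {y | ((j-k:ℕ):ℕ∞) < firstReturn T Y y}) := fun j k => by
    rw [hEdef]
    exact (herg.toMeasurePreserving.iterate k).measure_preimage
      (hYm.inter (hgtm _)).nullMeasurableSet
  -- pointwise sum identity
  have P : ∀ j x, (∑ n ∈ Finset.range (j+1), (Ypart T Y n).indicator (g j) x)
      = ∑ k ∈ Finset.range (j+1), (E j k).indicator (fun _ => r1^j * r2^k) x := by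
    intro j x
    by_cases hvis : ∃ k, k ≤ j ∧ T^[k] x ∈ Y
    · obtain ⟨hKj, hKY⟩ : lastVisit T Y j x ≤ j ∧ T^[lastVisit T Y j x] x ∈ Y :=
        lastVisit_mem T Y hvis
      set K := lastVisit T Y j x with hK
      have hKmax : ∀ l, l ≤ j → T^[l] x ∈ Y → l ≤ K :=
        fun l h1 h2 => le_lastVisit T Y h1 h2
      have hgval : g j x = r1 ^ j * r2 ^ K := by
        simp only [hgdef]
        rw [← hK, C2]
      have hEK : x ∈ E j K := by
        simp only [hEdef, mem_preimage, mem_inter_iff, mem_setOf_eq]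
        refine ⟨hKY, ?_⟩
        rw [lt_firstReturn_iff]
        intro i hi1 hi2 hiY
        rw [← Function.iterate_add_apply] at hiY
        have := hKmax (i+K) (by omega) hiY
        omega
      have hEne : ∀ k, k ∈ Finset.range (j+1) → k ≠ K → x ∉ E j k := by
        intro k hkr hkne hmem
        simp only [hEdef, mem_preimage, mem_inter_iff, mem_setOf_eq] at hmem
        obtain ⟨hm1, hm2⟩ := hmem
        have hkK : k ≤ K := hKmax k (by simp only [Finset.mem_range] at hkr; omega) hm1
        rw [lt_firstReturn_iff] at hm2
        refine hm2 (K - k) (by omega) (by omega) ?_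
        rw [← Function.iterate_add_apply, show K - k + k = K by omega]
        exact hKY
      have hRHS : (∑ k ∈ Finset.range (j+1), (E j k).indicator (fun _ => r1^j * r2^k) x)
          = r1 ^ j * r2 ^ K := by
        rw [Finset.sum_eq_single K
          (fun k hkr hkne => indicator_of_notMem (hEne k hkr hkne) _)
          (fun hKr => absurd (Finset.mem_range.mpr (by omega)) hKr)]
        exact indicator_of_mem hEK _
      rw [hRHS]
      by_cases hxY : x ∈ Y
      · rw [Finset.sum_eq_single 0 ?_ ?_]
        · rw [indicator_of_mem (show x ∈ Ypart T Y 0 from hxY), hgval]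
        · intro n hnr hn0
          obtain ⟨m, rfl⟩ : ∃ m, n = m + 1 := ⟨n - 1, by omega⟩
          refine indicator_of_notMem ?_ _
          rw [Ypart_succ]
          exact fun hmem => hmem.1 hxY
        · intro h0; exact absurd (Finset.mem_range.mpr (by omega)) h0
      · have hK1 : 1 ≤ K := by
          rcases Nat.eq_zero_or_pos K with h | h
          · exfalso; apply hxY
            have h2 := hKY
            rw [h] at h2
            simpa using h2
          · exact h
        have hφle : firstReturn T Y x ≤ (K : ℕ∞) := iInf₂_le K ⟨hK1, hKY⟩
        have hφne : firstReturn T Y x ≠ ⊤ :=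
          ne_top_of_le_ne_top (ENat.coe_ne_top K) hφle
        obtain ⟨m, hm⟩ : ∃ m : ℕ, (m : ℕ∞) = firstReturn T Y x :=
          ⟨(firstReturn T Y x).toNat, ENat.coe_toNat hφne⟩
        have hm0 : m ≠ 0 := by
          intro h0
          have := firstReturn_pos T Y x
          rw [← hm, h0] at this
          simpa using this
        obtain ⟨n0, rfl⟩ : ∃ n0, m = n0 + 1 := ⟨m - 1, by omega⟩
        have hmem : x ∈ Ypart T Y (n0+1) := by
          rw [Ypart_succ]
          exact ⟨hxY, hm.symm⟩
        have hle : n0 + 1 ≤ K := by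
          have h2 := hφle
          rw [← hm] at h2
          exact_mod_cast h2
        rw [Finset.sum_eq_single (n0+1) ?_ ?_]
        · rw [indicator_of_mem hmem, hgval]
        · intro n hnr hnne
          refine indicator_of_notMem ?_ _
          cases n with
          | zero => exact fun hmem' => hxY hmem'
          | succ m' =>
            intro hmem'
            rw [Ypart_succ] at hmem'
            have h1 : firstReturn T Y x = ((m'+1:ℕ):ℕ∞) := hmem'.2
            rw [← hm] at h1
            have : n0 + 1 = m' + 1 := by exact_mod_cast h1
            omega
        · intro h0; exact absurd (Finset.mem_range.mpr (by omega)) h0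
    · have hnov : ∀ k, k ≤ j → T^[k] x ∉ Y := fun k hk hkY => hvis ⟨k, hk, hkY⟩
      refine Eq.trans (Finset.sum_eq_zero ?_) (Finset.sum_eq_zero ?_).symm
      · intro n hn
        refine indicator_of_notMem ?_ _
        cases n with
        | zero => exact fun h => hnov 0 (by omega) (by simpa [Ypart_zero] using h)
        | succ m =>
          intro hmem
          rw [Ypart_succ] at hmem
          have h2 : firstReturn T Y x = ((m+1:ℕ):ℕ∞) := hmem.2
          have h3 := ((firstReturn_eq_iff T Y).1 h2).1
          exact hnov (m+1) (by simp only [Finset.mem_range] at hn; omega) h3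
      · intro k hk
        refine indicator_of_notMem ?_ _
        intro hmem
        simp only [hEdef, mem_preimage, mem_inter_iff, mem_setOf_eq] at hmem
        exact hnov k (by simp only [Finset.mem_range] at hk; omega) hmem.1
  -- step 9 : finite sum over the partition
  have step9 : ∀ j, (∑ n ∈ Finset.range (j+1), ∫⁻ x in Ypart T Y n, g j x ∂μ)
      = ∑ k ∈ Finset.range (j+1),
          r ^ k * (r1 ^ (j-k) * μ (Y ∩ {y | ((j-k:ℕ):ℕ∞) < firstReturn T Y y})) := by
    intro j
    have h1 : (∑ n ∈ Finset.range (j+1), ∫⁻ x in Ypart T Y n, g j x ∂μ)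
        = ∫⁻ x, ∑ n ∈ Finset.range (j+1), (Ypart T Y n).indicator (g j) x ∂μ := by
      rw [lintegral_finset_sum _
        (fun n _ => (hgm j).indicator (measurable_Ypart T Y hT hYm n))]
      exact Finset.sum_congr rfl fun n _ =>
        (lintegral_indicator (measurable_Ypart T Y hT hYm n) _).symm
    have h2 : ∫⁻ x, ∑ n ∈ Finset.range (j+1), (Ypart T Y n).indicator (g j) x ∂μ
        = ∫⁻ x, ∑ k ∈ Finset.range (j+1), (E j k).indicator (fun _ => r1^j * r2^k) x ∂μ :=
      lintegral_congr fun x => P j x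
    have h3 : ∫⁻ x, ∑ k ∈ Finset.range (j+1), (E j k).indicator (fun _ => r1^j * r2^k) x ∂μ
        = ∑ k ∈ Finset.range (j+1), (r1^j * r2^k) * μ (E j k) := by
      rw [lintegral_finset_sum _ (fun k _ => measurable_const.indicator (hEm j k))]
      exact Finset.sum_congr rfl fun k _ => lintegral_indicator_const (hEm j k) _
    rw [h1, h2, h3]
    apply Finset.sum_congr rfl
    intro k hk
    have hk' : k ≤ j := by simp only [Finset.mem_range] at hk; omega
    rw [hEμ j k, hr, show r1^j = r1^k * r1^(j-k) by rw [← pow_add]; congr 1; omega, mul_pow]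
    ring
  -- key per-n computation
  have key1 : ∀ n : ℕ,
      ∫⁻ x in Y, A x * (r ^ n * (hatT^[n] (u n)) x) ∂μ
        = ∑' m : ℕ, ∫⁻ x in Ypart T Y n, g (n+m) x ∂μ := by
    intro n
    have hw : Measurable (hatT^[n] (u n)) := hiter n (u n) (hum n)
    have e1 : ∫⁻ x in Y, A x * (r ^ n * (hatT^[n] (u n)) x) ∂μ
        = r ^ n * ∫⁻ x in Y, A x * (hatT^[n] (u n)) x ∂μ := by
      rw [← lintegral_const_mul (r^n) (f := fun x => A x * (hatT^[n] (u n)) x) (hAm.mul hw)]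
      exact lintegral_congr fun x => by ring
    have e2 : ∫⁻ x in Y, A x * (hatT^[n] (u n)) x ∂μ
        = ∫⁻ x, (Y.indicator A) x * (hatT^[n] (u n)) x ∂μ := by
      rw [← lintegral_indicator hYm]
      exact lintegral_congr fun x => indicator_mul_left Y A _
    have e3 : ∫⁻ x, (Y.indicator A) x * (hatT^[n] (u n)) x ∂μ
        = ∫⁻ x, (Y.indicator A) (T^[n] x) * u n x ∂μ :=
      (hD n (Y.indicator A) (u n) (hAm.indicator hYm) (hum n)).symm
    have e4 : ∫⁻ x, (Y.indicator A) (T^[n] x) * u n x ∂μ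
        = ∫⁻ x in Ypart T Y n, (Y.indicator A) (T^[n] x) ∂μ := by
      rw [← lintegral_indicator (measurable_Ypart T Y hT hYm n)]
      apply lintegral_congr
      intro x
      by_cases hx : x ∈ Ypart T Y n
      · rw [Set.indicator_of_mem hx]
        simp only [hudef]
        rw [Set.indicator_of_mem hx, mul_one]
      · rw [Set.indicator_of_notMem hx]
        simp only [hudef]
        rw [Set.indicator_of_notMem hx, mul_zero]
    have e5 : r ^ n * ∫⁻ x in Ypart T Y n, (Y.indicator A) (T^[n] x) ∂μ
        = ∫⁻ x in Ypart T Y n, (∑' m : ℕ, g (n+m) x) ∂μ := by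
      have hcomp : Measurable fun x => (Y.indicator A) (T^[n] x) :=
        (hAm.indicator hYm).comp (hT.iterate n)
      rw [← lintegral_const_mul (r^n) hcomp]
      apply setLIntegral_congr_fun (measurable_Ypart T Y hT hYm n)
      intro x hx
      have hTnY : T^[n] x ∈ Y := by
        cases n with
        | zero => simpa [Ypart_zero] using hx
        | succ m =>
          rw [Ypart_succ] at hx
          exact ((firstReturn_eq_iff T Y).1 hx.2).1
      dsimp only
      rw [Set.indicator_of_mem hTnY]
      simp only [hAdef]
      rw [← ENNReal.tsum_mul_left]
      apply tsum_congr
      intro m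
      simp only [hgdef]
      rw [lastVisit_shift T Y hTnY]
      rw [show (-s2 * ((n + lastVisit T Y m (T^[n] x) : ℕ) : ℝ))
          = (-s2 * (n:ℝ)) + (-s2 * (lastVisit T Y m (T^[n] x) : ℝ)) by push_cast; ring]
      rw [Real.exp_add, ENNReal.ofReal_mul (exp_nonneg _), C2 n, hr, pow_add, mul_pow]
      ring
    have e6 : ∫⁻ x in Ypart T Y n, (∑' m : ℕ, g (n+m) x) ∂μ
        = ∑' m : ℕ, ∫⁻ x in Ypart T Y n, g (n+m) x ∂μ :=
      lintegral_tsum fun m => (hgm (n+m)).aemeasurable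
    rw [e1, e2, e3, e4, e5, e6]
  -- initial conversion of the integrand
  have step0 : ∀ x, (∑' n : ℕ, ENNReal.ofReal (Real.exp (-(n : ℝ) * s1)) *
        ENNReal.ofReal (Real.exp (-s2 * (lastVisit T Y n x : ℝ)))) *
      (∑' n : ℕ, ENNReal.ofReal (Real.exp (-(n : ℝ) * (s1 + s2))) *
        (hatT^[n] ((Ypart T Y n).indicator fun _ => (1:ℝ≥0∞))) x)
      = ∑' n : ℕ, A x * (r ^ n * (hatT^[n] (u n)) x) := by
    intro x
    have h1 : (∑' n : ℕ, ENNReal.ofReal (Real.exp (-(n : ℝ) * s1)) *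
        ENNReal.ofReal (Real.exp (-s2 * (lastVisit T Y n x : ℝ)))) = A x := by
      simp only [hAdef]
      exact tsum_congr fun n => by simp only [hgdef]; rw [C1' n]
    have h2 : (∑' n : ℕ, ENNReal.ofReal (Real.exp (-(n : ℝ) * (s1 + s2))) *
        (hatT^[n] ((Ypart T Y n).indicator fun _ => (1:ℝ≥0∞))) x)
        = ∑' n : ℕ, r ^ n * (hatT^[n] (u n)) x :=
      tsum_congr fun n => by rw [C1s n, hu' n]
    rw [h1, h2, ENNReal.tsum_mul_left]
  calc ∫⁻ x in Y,
      (∑' n : ℕ, ENNReal.ofReal (Real.exp (-(n : ℝ) * s1)) *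
        ENNReal.ofReal (Real.exp (-s2 * lastVisit T Y n x))) *
      (∑' n : ℕ, ENNReal.ofReal (Real.exp (-(n : ℝ) * (s1 + s2))) *
        (hatT^[n] ((Ypart T Y n).indicator fun _ => (1:ℝ≥0∞))) x) ∂μ
      = ∑' n : ℕ, ∫⁻ x in Y, A x * (r ^ n * (hatT^[n] (u n)) x) ∂μ := by
        rw [lintegral_congr step0]
        exact lintegral_tsum fun n =>
          (hAm.mul ((hiter n (u n) (hum n)).const_mul _)).aemeasurable
    _ = ∑' n : ℕ, ∑' m : ℕ, ∫⁻ x in Ypart T Y n, g (n+m) x ∂μ := tsum_congr key1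
    _ = ∑' j : ℕ, ∑ n ∈ Finset.range (j+1), ∫⁻ x in Ypart T Y n, g j x ∂μ :=
        tsum_shift_reindex (fun n j => ∫⁻ x in Ypart T Y n, g j x ∂μ)
    _ = ∑' j : ℕ, ∑ k ∈ Finset.range (j+1),
          r ^ k * (r1 ^ (j-k) * μ (Y ∩ {y | ((j-k:ℕ):ℕ∞) < firstReturn T Y y})) :=
        tsum_congr step9
    _ = (∑' k : ℕ, r ^ k) *
        (∑' i : ℕ, r1 ^ i * μ (Y ∩ {y | (i:ℕ∞) < firstReturn T Y y})) :=
        tsum_cauchy_reindex (fun k => r ^ k)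
          (fun i => r1 ^ i * μ (Y ∩ {y | (i:ℕ∞) < firstReturn T Y y}))
    _ = QY T Y μ s1 / (1 - ENNReal.ofReal (Real.exp (-(s1 + s2)))) := by
        rw [ENNReal.tsum_geometric, ← hrdef, ENNReal.div_eq_inv_mul]
        congr 1
        simp only [QY]
        exact tsum_congr fun i => by rw [C1' i]
end

section
/- Let $T$ be a CEMPT on $(X,\mathcal{A},\mu)$ and fix $t_0>0$, $K\in\mathbb{N}_0$. Suppose $\{H_t\}_{t>0}\cup\{G\}$ are nonnegative $L^1(\mu)$ functions such that there is $C_0>0$ with $C_0\sum_{k=0}^K\hat T^k H_t\ge G$ a.e. for all $t\ge t_0$ (uniform sweeping). Suppose $R_{n,t}:X\to(0,1]$ are measurable with $\sup\{\|R_{n,t}\circ T^k / R_{n+k,t}\|_{L^\infty(\mu)}: n\in\mathbb{N}_0, 0\le k\le K, t\ge t_0\}<\infty$. Then for any $q>0$, $\sup_{t\ge t_0}\,\big(\sum_{n\ge0}e^{-nq/t}\int_X R_{n,t}G\,d\mu\big)\big/\big(\sum_{n\ge0}e^{-nq/t}\int_X R_{n,t}H_t\,d\mu\big)<\infty$. 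-/
open MeasureTheory Filter Real Set
open scoped Topology ENNReal

/-- Integrating transforms: if `{H_t}` is uniformly sweeping for `G` and the `R_{n,t}`
satisfy a uniform ratio bound, then the ratio of the double transforms is bounded in `t`. -/
theorem stmt7 {X : Type*} [MeasurableSpace X] {μ : Measure X} [SigmaFinite μ]
    {T : X → X} (hcons : Conservative T μ) (herg : Ergodic T μ)
    (hatT : (X → ℝ≥0∞) → (X → ℝ≥0∞))
    (hatTmeas : ∀ u, Measurable u → Measurable (hatT u))
    (hatTdual : ∀ u v : X → ℝ≥0∞, Measurable u → Measurable v →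
      ∫⁻ x, v (T x) * u x ∂μ = ∫⁻ x, v x * hatT u x ∂μ)
    (t0 : ℝ) (ht0 : 0 < t0) (K : ℕ)
    (H : ℝ → X → ℝ≥0∞) (G : X → ℝ≥0∞)
    (hHmeas : ∀ t, Measurable (H t)) (hGmeas : Measurable G)
    (hHint : ∀ t, ∫⁻ x, H t x ∂μ < ⊤) (hGint : ∫⁻ x, G x ∂μ < ⊤)
    (C0 : ℝ≥0∞) (hC0 : C0 ≠ ⊤)
    (hsweep : ∀ t, t0 ≤ t → ∀ᵐ x ∂μ,
      G x ≤ C0 * ∑ k ∈ Finset.range (K + 1), (hatT^[k] (H t)) x)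
    (R : ℕ → ℝ → X → ℝ) (hRmeas : ∀ n t, Measurable (R n t))
    (hR : ∀ n t x, 0 < R n t x ∧ R n t x ≤ 1)
    (B : ℝ) (hB : ∀ (n k : ℕ) (t : ℝ), k ≤ K → t0 ≤ t →
      ∀ᵐ x ∂μ, R n t (T^[k] x) ≤ B * R (n + k) t x)
    (q : ℝ) (hq : 0 < q) :
    ∃ M : ℝ≥0∞, M ≠ ⊤ ∧ ∀ t, t0 ≤ t →
      (∑' n : ℕ, ENNReal.ofReal (Real.exp (-(n : ℝ) * q / t)) *
        ∫⁻ x, ENNReal.ofReal (R n t x) * G x ∂μ) /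
      (∑' n : ℕ, ENNReal.ofReal (Real.exp (-(n : ℝ) * q / t)) *
        ∫⁻ x, ENNReal.ofReal (R n t x) * H t x ∂μ) ≤ M := by
  classical
  have hTmeas : Measurable T := herg.toMeasurePreserving.measurable
  set B' : ℝ := max B 1 with hB'def
  have hB'0 : 0 ≤ B' := le_trans zero_le_one (le_max_right _ _)
  -- measurability of iterates of hatT
  have hmeasIter : ∀ (k : ℕ) (t : ℝ), Measurable (hatT^[k] (H t)) := by
    intro k t
    induction k with
    | zero => simpa using hHmeas t
    | succ k ih => rw [Function.iterate_succ_apply']; exact hatTmeas _ ih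
  -- iterated duality
  have hdual : ∀ (k : ℕ) (u v : X → ℝ≥0∞), Measurable u → Measurable v →
      ∫⁻ x, v (T^[k] x) * u x ∂μ = ∫⁻ x, v x * (hatT^[k] u) x ∂μ := by
    intro k
    induction k with
    | zero => intro u v hu hv; simp
    | succ k ih =>
      intro u v hu hv
      calc ∫⁻ x, v (T^[k+1] x) * u x ∂μ
          = ∫⁻ x, (fun y => v (T^[k] y)) (T x) * u x ∂μ := by
            simp_rw [Function.iterate_succ_apply]
        _ = ∫⁻ x, (fun y => v (T^[k] y)) x * hatT u x ∂μ :=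
            hatTdual u _ hu (hv.comp (hTmeas.iterate k))
        _ = ∫⁻ x, v x * (hatT^[k] (hatT u)) x ∂μ := ih (hatT u) v (hatTmeas u hu) hv
        _ = ∫⁻ x, v x * (hatT^[k+1] u) x ∂μ := by
            simp_rw [Function.iterate_succ_apply]
  -- per-n bound
  have key : ∀ (n : ℕ) (t : ℝ), t0 ≤ t →
      (∫⁻ x, ENNReal.ofReal (R n t x) * G x ∂μ) ≤
      C0 * ENNReal.ofReal B' * ∑ k ∈ Finset.range (K+1),
        ∫⁻ x, ENNReal.ofReal (R (n+k) t x) * H t x ∂μ := by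
    intro n t ht
    have step1 : (∫⁻ x, ENNReal.ofReal (R n t x) * G x ∂μ) ≤
        C0 * ∑ k ∈ Finset.range (K+1),
          ∫⁻ x, ENNReal.ofReal (R n t x) * (hatT^[k] (H t)) x ∂μ := by
      have hmono : (∫⁻ x, ENNReal.ofReal (R n t x) * G x ∂μ) ≤
          ∫⁻ x, ENNReal.ofReal (R n t x) *
            (C0 * ∑ k ∈ Finset.range (K+1), (hatT^[k] (H t)) x) ∂μ := by
        refine lintegral_mono_ae ?_
        filter_upwards [hsweep t ht] with x hx
        exact mul_le_mul_right hx _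
      refine hmono.trans_eq ?_
      have : ∀ x, ENNReal.ofReal (R n t x) *
            (C0 * ∑ k ∈ Finset.range (K+1), (hatT^[k] (H t)) x)
          = C0 * ∑ k ∈ Finset.range (K+1),
              ENNReal.ofReal (R n t x) * (hatT^[k] (H t)) x := by
        intro x
        simp only [Finset.mul_sum]
        exact Finset.sum_congr rfl fun k _ => by ring
      simp_rw [this]
      rw [lintegral_const_mul _ (by
        exact Finset.measurable_sum _ fun k _ =>
          ((hRmeas n t).ennreal_ofReal).mul (hmeasIter k t))]
      congr 1
      exact lintegral_finset_sum _ fun k _ =>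
        ((hRmeas n t).ennreal_ofReal).mul (hmeasIter k t)
    refine step1.trans ?_
    rw [mul_assoc]
    refine mul_le_mul_right ?_ C0
    rw [Finset.mul_sum]
    refine Finset.sum_le_sum fun k hk => ?_
    have hkK : k ≤ K := Nat.lt_succ_iff.mp (Finset.mem_range.mp hk)
    have hdk : (∫⁻ x, ENNReal.ofReal (R n t x) * (hatT^[k] (H t)) x ∂μ)
        = ∫⁻ x, ENNReal.ofReal (R n t (T^[k] x)) * H t x ∂μ := by
      exact (hdual k (H t) (fun x => ENNReal.ofReal (R n t x)) (hHmeas t)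
        ((hRmeas n t).ennreal_ofReal)).symm
    rw [hdk, ← lintegral_const_mul (f := fun x => ENNReal.ofReal (R (n+k) t x) * H t x) _
      (((hRmeas (n+k) t).ennreal_ofReal).mul (hHmeas t))]
    refine lintegral_mono_ae ?_
    filter_upwards [hB n k t hkK ht] with x hx
    have h1 : R n t (T^[k] x) ≤ B' * R (n+k) t x := by
      refine hx.trans ?_
      exact mul_le_mul_of_nonneg_right (le_max_left _ _) (hR (n+k) t x).1.le
    calc ENNReal.ofReal (R n t (T^[k] x)) * H t x
        ≤ ENNReal.ofReal (B' * R (n+k) t x) * H t x :=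
          mul_le_mul_left (ENNReal.ofReal_le_ofReal h1) _
      _ = ENNReal.ofReal B' * (ENNReal.ofReal (R (n+k) t x) * H t x) := by
          rw [ENNReal.ofReal_mul hB'0, mul_assoc]
  -- now the double transform bound
  set E : ℝ≥0∞ := ENNReal.ofReal (Real.exp ((K : ℝ) * q / t0)) with hEdef
  refine ⟨C0 * ENNReal.ofReal B' * (K+1) * E, ?_, ?_⟩
  · exact ENNReal.mul_ne_top (ENNReal.mul_ne_top (ENNReal.mul_ne_top hC0
      ENNReal.ofReal_ne_top) (by simp)) ENNReal.ofReal_ne_top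
  intro t ht
  have htpos : 0 < t := lt_of_lt_of_le ht0 ht
  set a : ℕ → ℝ≥0∞ := fun n => ENNReal.ofReal (Real.exp (-(n : ℝ) * q / t)) with hadef
  set J : ℕ → ℝ≥0∞ := fun n => ∫⁻ x, ENNReal.ofReal (R n t x) * H t x ∂μ with hJdef
  refine ENNReal.div_le_of_le_mul ?_
  have hexp : ∀ (n k : ℕ), k ≤ K → a n ≤ E * a (n + k) := by
    intro n k hk
    rw [hadef, hEdef, ← ENNReal.ofReal_mul (Real.exp_pos _).le, ← Real.exp_add]
    refine ENNReal.ofReal_le_ofReal (Real.exp_le_exp.mpr ?_)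
    have h1 : (k : ℝ) * q / t ≤ (K : ℝ) * q / t0 := by
      rw [div_le_div_iff₀ htpos ht0]
      have hkK' : (k : ℝ) ≤ K := Nat.cast_le.mpr hk
      have h2 : (k : ℝ) * t0 ≤ (K : ℝ) * t :=
        mul_le_mul hkK' ht ht0.le (Nat.cast_nonneg K)
      nlinarith [mul_le_mul_of_nonneg_left h2 hq.le]
    have : -(n : ℝ) * q / t = (k : ℝ) * q / t + (-((n : ℝ) + k) * q / t) := by
      field_simp; ring
    rw [this]
    push_cast
    gcongr
  calc (∑' n : ℕ, a n * ∫⁻ x, ENNReal.ofReal (R n t x) * G x ∂μ)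
      ≤ ∑' n : ℕ, a n * (C0 * ENNReal.ofReal B' *
          ∑ k ∈ Finset.range (K+1), J (n+k)) :=
        ENNReal.tsum_le_tsum fun n => mul_le_mul_right (key n t ht) _
    _ = C0 * ENNReal.ofReal B' *
          ∑' n : ℕ, ∑ k ∈ Finset.range (K+1), a n * J (n+k) := by
        rw [← ENNReal.tsum_mul_left]
        refine tsum_congr fun n => ?_
        simp only [Finset.mul_sum]
        exact Finset.sum_congr rfl fun k _ => by ring
    _ = C0 * ENNReal.ofReal B' *
          ∑ k ∈ Finset.range (K+1), ∑' n : ℕ, a n * J (n+k) := by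
        congr 1
        exact Summable.tsum_finsetSum fun k _ => ENNReal.summable
    _ ≤ C0 * ENNReal.ofReal B' *
          ∑ k ∈ Finset.range (K+1), E * ∑' m : ℕ, a m * J m := by
        refine mul_le_mul_right (Finset.sum_le_sum fun k hk => ?_) _
        have hkK : k ≤ K := Nat.lt_succ_iff.mp (Finset.mem_range.mp hk)
        calc (∑' n : ℕ, a n * J (n+k))
            ≤ ∑' n : ℕ, E * (a (n+k) * J (n+k)) := by
              refine ENNReal.tsum_le_tsum fun n => ?_
              rw [← mul_assoc]
              exact mul_le_mul_left (hexp n k hkK) _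
          _ = E * ∑' n : ℕ, a (n+k) * J (n+k) := ENNReal.tsum_mul_left
          _ ≤ E * ∑' m : ℕ, a m * J m := by
              refine mul_le_mul_right ?_ E
              exact ENNReal.tsum_comp_le_tsum_of_injective
                (add_left_injective k) (fun m => a m * J m)
    _ = C0 * ENNReal.ofReal B' * (K+1) * E * ∑' m : ℕ, a m * J m := by
        rw [Finset.sum_const, Finset.card_range, nsmul_eq_mul]
        push_cast
        ring
end

section
/- Under the assumptions of the previous lemma with $G=1_Y$ where $0<\mu(Y)<\infty$, suppose additionally that $H_t,H\in L^\infty(\mu)$ are nonnegative, supported on $Y$, and $H_t\to H$ in $L^\infty(\mu)$ as $t\to\infty$. Then for any $q>0$, $\sum_{n\ge0}e^{-nq/t}\int_Y R_{n,t}H_t\,d\mu \sim \sum_{n\ge0}e^{-nq/t}\int_Y R_{n,t}H\,d\mu$ as $t\to\infty$. -/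
open MeasureTheory Filter Real Set
open scoped Topology ENNReal

/-- Integrating transforms: under uniform sweeping for `1_Y` and `H_t → H` in `L^∞`,
the double transforms against `H_t` and against `H` are asymptotically equivalent. -/
theorem stmt8 {X : Type*} [MeasurableSpace X] {μ : Measure X} [SigmaFinite μ]
    {T : X → X} (hcons : Conservative T μ) (herg : Ergodic T μ)
    {Y : Set X} (hYm : MeasurableSet Y) (hY0 : 0 < μ Y) (hY1 : μ Y < ⊤)
    (hatT : (X → ℝ≥0∞) → (X → ℝ≥0∞))
    (hatTmeas : ∀ u, Measurable u → Measurable (hatT u))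
    (hatTdual : ∀ u v : X → ℝ≥0∞, Measurable u → Measurable v →
      ∫⁻ x, v (T x) * u x ∂μ = ∫⁻ x, v x * hatT u x ∂μ)
    (t0 : ℝ) (ht0 : 0 < t0) (K : ℕ)
    (H : ℝ → X → ℝ≥0∞) (Hlim : X → ℝ≥0∞)
    (hHmeas : ∀ t, Measurable (H t)) (hHlimmeas : Measurable Hlim)
    -- `H_t`, `H` are nonnegative, essentially bounded and supported on `Y`
    (hHbd : ∀ t, ∃ M : ℝ≥0∞, M ≠ ⊤ ∧ ∀ᵐ x ∂μ, H t x ≤ M)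
    (hHlimbd : ∃ M : ℝ≥0∞, M ≠ ⊤ ∧ ∀ᵐ x ∂μ, Hlim x ≤ M)
    (hHsupp : ∀ t x, x ∉ Y → H t x = 0) (hHlimsupp : ∀ x, x ∉ Y → Hlim x = 0)
    -- uniform sweeping of `{H_t}_{t ≥ t0}` for `1_Y`
    (C0 : ℝ≥0∞) (hC0 : C0 ≠ ⊤)
    (hsweep : ∀ t, t0 ≤ t → ∀ᵐ x ∂μ,
      Y.indicator (fun _ => (1:ℝ≥0∞)) x ≤ C0 * ∑ k ∈ Finset.range (K + 1), (hatT^[k] (H t)) x)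
    -- `H_t → H` in `L^∞(μ)` as `t → ∞`
    (hHconv : ∀ ε : ℝ≥0∞, 0 < ε → ∀ᶠ t in atTop,
      ∀ᵐ x ∂μ, H t x ≤ Hlim x + ε ∧ Hlim x ≤ H t x + ε)
    (R : ℕ → ℝ → X → ℝ) (hRmeas : ∀ n t, Measurable (R n t))
    (hR : ∀ n t x, 0 < R n t x ∧ R n t x ≤ 1)
    (B : ℝ) (hB : ∀ (n k : ℕ) (t : ℝ), k ≤ K → t0 ≤ t →
      ∀ᵐ x ∂μ, R n t (T^[k] x) ≤ B * R (n + k) t x)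
    (q : ℝ) (hq : 0 < q) :
    Tendsto (fun t =>
      (∑' n : ℕ, ENNReal.ofReal (Real.exp (-(n : ℝ) * q / t)) *
        ∫⁻ x in Y, ENNReal.ofReal (R n t x) * H t x ∂μ) /
      (∑' n : ℕ, ENNReal.ofReal (Real.exp (-(n : ℝ) * q / t)) *
        ∫⁻ x in Y, ENNReal.ofReal (R n t x) * Hlim x ∂μ))
      atTop (𝓝 1) := by
  classical
  have hT : Measurable T := hcons.measurable
  have hμ0 : μ ≠ 0 := by
    intro h; rw [h] at hY0; simp at hY0
  haveI : (ae μ).NeBot := ae_neBot.mpr hμ0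
  -- B is positive
  have hB0 : 0 < B := by
    obtain ⟨x, hx⟩ := (hB 0 0 t0 (Nat.zero_le K) le_rfl).exists
    have h1 : 0 < R 0 t0 x := (hR 0 t0 x).1
    simp only [Function.iterate_zero, id_eq, Nat.add_zero] at hx
    nlinarith
  -- measurability of ofReal (R n t ·)
  have hRm : ∀ n t, Measurable fun x => ENNReal.ofReal (R n t x) :=
    fun n t => ENNReal.measurable_ofReal.comp (hRmeas n t)
  -- measurability of iterates of hatT
  have hiter : ∀ (u : X → ℝ≥0∞), Measurable u → ∀ k, Measurable (hatT^[k] u) := by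
    intro u hu k
    induction k with
    | zero => simpa using hu
    | succ k ih => rw [Function.iterate_succ_apply']; exact hatTmeas _ ih
  -- iterated duality
  have hdual : ∀ (k : ℕ) (u v : X → ℝ≥0∞), Measurable u → Measurable v →
      ∫⁻ x, v (T^[k] x) * u x ∂μ = ∫⁻ x, v x * hatT^[k] u x ∂μ := by
    intro k
    induction k with
    | zero => intro u v hu hv; simp
    | succ k ih =>
      intro u v hu hv
      have h1 : ∫⁻ x, v (T^[k+1] x) * u x ∂μ
          = ∫⁻ x, (fun y => v (T^[k] y)) (T x) * u x ∂μ := by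
        simp [Function.iterate_succ_apply]
      rw [h1, hatTdual u (fun y => v (T^[k] y)) hu (hv.comp (hT.iterate k)),
        ih (hatT u) v (hatTmeas u hu) hv]
      simp [Function.iterate_succ_apply]
  -- notation
  set A : (X → ℝ≥0∞) → ℝ → ℝ≥0∞ := fun G t => ∑' n : ℕ,
      ENNReal.ofReal (Real.exp (-(n : ℝ) * q / t)) *
        ∫⁻ x in Y, ENNReal.ofReal (R n t x) * G x ∂μ with hA_def
  set S : ℝ → ℝ≥0∞ := fun t => ∑' n : ℕ,
      ENNReal.ofReal (Real.exp (-(n : ℝ) * q / t)) *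
        ∫⁻ x in Y, ENNReal.ofReal (R n t x) ∂μ with hS_def
  show Tendsto (fun t => A (H t) t / A Hlim t) atTop (𝓝 1)
  -- integrals over X equal integrals over Y for functions supported on Y
  have hIX : ∀ (G : X → ℝ≥0∞), (∀ x, x ∉ Y → G x = 0) → ∀ n t,
      ∫⁻ x, ENNReal.ofReal (R n t x) * G x ∂μ
        = ∫⁻ x in Y, ENNReal.ofReal (R n t x) * G x ∂μ := by
    intro G hG n t
    rw [← lintegral_indicator hYm]
    congr 1
    funext x
    by_cases hx : x ∈ Y
    · simp [Set.indicator_of_mem hx]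
    · simp [Set.indicator_of_notMem hx, hG x hx]
  -- uniform bound on the integrals
  have hIle : ∀ (G : X → ℝ≥0∞) (M : ℝ≥0∞), (∀ᵐ x ∂μ, G x ≤ M) → ∀ n t,
      (∫⁻ x in Y, ENNReal.ofReal (R n t x) * G x ∂μ) ≤ M * μ Y := by
    intro G M hM n t
    calc (∫⁻ x in Y, ENNReal.ofReal (R n t x) * G x ∂μ)
        ≤ ∫⁻ _ in Y, M ∂μ := by
          refine lintegral_mono_ae ?_
          filter_upwards [ae_restrict_of_ae hM] with x hx
          calc ENNReal.ofReal (R n t x) * G x ≤ 1 * M := by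
                gcongr
                exact ENNReal.ofReal_le_one.mpr (hR n t x).2
          _ = M := one_mul M
      _ = M * μ Y := by simp
  -- geometric sum finiteness
  have hgeo : ∀ t : ℝ, 0 < t →
      (∑' n : ℕ, ENNReal.ofReal (Real.exp (-(n : ℝ) * q / t))) ≠ ⊤ := by
    intro t ht
    have h1 : ∀ n : ℕ, ENNReal.ofReal (Real.exp (-(n : ℝ) * q / t))
        = ENNReal.ofReal (Real.exp (-(q / t))) ^ n := by
      intro n
      have h2 : -(n : ℝ) * q / t = (n : ℝ) * (-(q / t)) := by ring
      rw [h2, Real.exp_nat_mul, ENNReal.ofReal_pow (Real.exp_nonneg _)]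
    rw [tsum_congr h1, ENNReal.tsum_geometric]
    rw [Ne, ENNReal.inv_eq_top, tsub_eq_zero_iff_le, not_le]
    exact ENNReal.ofReal_lt_one.mpr (Real.exp_lt_one_iff.mpr (neg_neg_of_pos (by positivity)))
  -- A is finite for bounded integrands
  have hAtop : ∀ (G : X → ℝ≥0∞) (M : ℝ≥0∞), M ≠ ⊤ → (∀ᵐ x ∂μ, G x ≤ M) →
      ∀ t : ℝ, 0 < t → A G t ≠ ⊤ := by
    intro G M hMt hM t ht
    have hle : A G t ≤ (M * μ Y) * ∑' n : ℕ, ENNReal.ofReal (Real.exp (-(n : ℝ) * q / t)) := by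
      rw [ENNReal.tsum_mul_left.symm]
      refine ENNReal.tsum_le_tsum fun n => ?_
      rw [mul_comm (M * μ Y)]
      gcongr
      exact hIle G M hM n t
    exact ne_top_of_le_ne_top
      (ENNReal.mul_ne_top (ENNReal.mul_ne_top hMt hY1.ne) (hgeo t ht)) hle
  -- positivity of S
  have hS0 : ∀ t : ℝ, S t ≠ 0 := by
    intro t hzero
    have h0 : (∫⁻ x in Y, ENNReal.ofReal (R 0 t x) ∂μ) ≠ 0 := by
      intro h
      rw [lintegral_eq_zero_iff (hRm 0 t)] at h
      haveI : (ae (μ.restrict Y)).NeBot := ae_neBot.mpr (by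
        intro hr
        have : μ Y = 0 := by
          have := congrArg (fun ν : Measure X => ν Set.univ) hr
          simpa [Measure.restrict_apply_univ] using this
        exact hY0.ne' this)
      obtain ⟨x, hx⟩ := h.exists
      exact absurd hx (by simp [(ENNReal.ofReal_pos.mpr (hR 0 t x).1).ne'])
    have hle : ENNReal.ofReal (Real.exp (-(0 : ℕ) * q / t)) *
        (∫⁻ x in Y, ENNReal.ofReal (R 0 t x) ∂μ) ≤ S t := ENNReal.le_tsum 0
    rw [hzero] at hle
    have : ENNReal.ofReal (Real.exp (-(0 : ℕ) * q / t)) *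
        (∫⁻ x in Y, ENNReal.ofReal (R 0 t x) ∂μ) ≠ 0 := by
      simp [h0]
    exact this (le_antisymm hle zero_le)
  -- comparison of A's via L^∞ closeness
  have hAcomp : ∀ (G G' : X → ℝ≥0∞), Measurable G' → ∀ (ε : ℝ≥0∞) (t : ℝ),
      (∀ᵐ x ∂μ, G x ≤ G' x + ε) → A G t ≤ A G' t + ε * S t := by
    intro G G' hG' ε t hle
    have hn : ∀ n : ℕ, (∫⁻ x in Y, ENNReal.ofReal (R n t x) * G x ∂μ)
        ≤ (∫⁻ x in Y, ENNReal.ofReal (R n t x) * G' x ∂μ)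
          + ε * ∫⁻ x in Y, ENNReal.ofReal (R n t x) ∂μ := by
      intro n
      have h1 : (∫⁻ x in Y, ENNReal.ofReal (R n t x) * G x ∂μ)
          ≤ ∫⁻ x in Y, (ENNReal.ofReal (R n t x) * G' x
              + ENNReal.ofReal (R n t x) * ε) ∂μ := by
        refine lintegral_mono_ae ?_
        filter_upwards [ae_restrict_of_ae hle] with x hx
        calc ENNReal.ofReal (R n t x) * G x
            ≤ ENNReal.ofReal (R n t x) * (G' x + ε) := by gcongr
          _ = ENNReal.ofReal (R n t x) * G' x + ENNReal.ofReal (R n t x) * ε := by ring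
      refine h1.trans ?_
      rw [lintegral_add_right _ ((hRm n t).mul_const ε),
        lintegral_mul_const ε (hRm n t), mul_comm _ ε]
    calc A G t ≤ ∑' n : ℕ, (ENNReal.ofReal (Real.exp (-(n : ℝ) * q / t)) *
            (∫⁻ x in Y, ENNReal.ofReal (R n t x) * G' x ∂μ)
          + ε * (ENNReal.ofReal (Real.exp (-(n : ℝ) * q / t)) *
            ∫⁻ x in Y, ENNReal.ofReal (R n t x) ∂μ)) := by
              refine ENNReal.tsum_le_tsum fun n => ?_
              calc ENNReal.ofReal (Real.exp (-(n : ℝ) * q / t)) *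
                    (∫⁻ x in Y, ENNReal.ofReal (R n t x) * G x ∂μ)
                  ≤ ENNReal.ofReal (Real.exp (-(n : ℝ) * q / t)) *
                    ((∫⁻ x in Y, ENNReal.ofReal (R n t x) * G' x ∂μ)
                      + ε * ∫⁻ x in Y, ENNReal.ofReal (R n t x) ∂μ) := by
                    gcongr
                    exact hn n
                _ = _ := by ring
      _ = A G' t + ε * S t := by rw [ENNReal.tsum_add, ENNReal.tsum_mul_left]
  -- the sweeping constant
  set E : ℝ≥0∞ := ENNReal.ofReal (Real.exp ((K : ℝ) * q / t0)) with hE_def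
  set C2 : ℝ≥0∞ := C0 * ENNReal.ofReal B * E * (K + 1 : ℕ) + 1 with hC2_def
  have hC2top : C2 ≠ ⊤ := by
    refine ENNReal.add_ne_top.mpr ⟨?_, ENNReal.one_ne_top⟩
    exact ENNReal.mul_ne_top (ENNReal.mul_ne_top
      (ENNReal.mul_ne_top hC0 ENNReal.ofReal_ne_top) ENNReal.ofReal_ne_top)
      (ENNReal.natCast_ne_top _)
  have hC2zero : C2 ≠ 0 := by
    simp [hC2_def]
  -- the main sweeping estimate : S t ≤ C2 * A (H t) t
  have hsweepA : ∀ t : ℝ, t0 ≤ t → S t ≤ C2 * A (H t) t := by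
    intro t ht
    have htpos : (0 : ℝ) < t := lt_of_lt_of_le ht0 ht
    -- pointwise-in-n estimate
    have hJ : ∀ n : ℕ, (∫⁻ x in Y, ENNReal.ofReal (R n t x) ∂μ)
        ≤ C0 * ∑ k ∈ Finset.range (K + 1), ENNReal.ofReal B *
            ∫⁻ x in Y, ENNReal.ofReal (R (n + k) t x) * H t x ∂μ := by
      intro n
      have hiterm : ∀ k, Measurable (hatT^[k] (H t)) := hiter (H t) (hHmeas t)
      have step1 : (∫⁻ x in Y, ENNReal.ofReal (R n t x) ∂μ)
          ≤ ∫⁻ x, (C0 * ∑ k ∈ Finset.range (K + 1), hatT^[k] (H t) x) *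
              ENNReal.ofReal (R n t x) ∂μ := by
        rw [← lintegral_indicator hYm]
        refine lintegral_mono_ae ?_
        filter_upwards [hsweep t ht] with x hx
        by_cases hxY : x ∈ Y
        · calc Y.indicator (fun x => ENNReal.ofReal (R n t x)) x
              = Y.indicator (fun _ => (1 : ℝ≥0∞)) x * ENNReal.ofReal (R n t x) := by
                simp [Set.indicator_of_mem hxY]
            _ ≤ _ := by gcongr
        · simp [Set.indicator_of_notMem hxY]
      have step2 : ∫⁻ x, (C0 * ∑ k ∈ Finset.range (K + 1), hatT^[k] (H t) x) *
              ENNReal.ofReal (R n t x) ∂μ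
          = C0 * ∑ k ∈ Finset.range (K + 1),
              ∫⁻ x, ENNReal.ofReal (R n t x) * hatT^[k] (H t) x ∂μ := by
        have : ∀ x, (C0 * ∑ k ∈ Finset.range (K + 1), hatT^[k] (H t) x) *
              ENNReal.ofReal (R n t x)
            = C0 * ∑ k ∈ Finset.range (K + 1),
                ENNReal.ofReal (R n t x) * hatT^[k] (H t) x := by
          intro x
          rw [mul_assoc, Finset.sum_mul]
          congr 1
          exact Finset.sum_congr rfl fun k _ => mul_comm _ _
        rw [lintegral_congr this, lintegral_const_mul C0 (by
          exact Finset.measurable_sum _ fun k _ => (hRm n t).mul (hiterm k)),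
          lintegral_finset_sum (f := fun k x => ENNReal.ofReal (R n t x) * hatT^[k] (H t) x) _
          fun k _ => (hRm n t).mul (hiterm k)]
      have step3 : ∀ k ∈ Finset.range (K + 1),
          (∫⁻ x, ENNReal.ofReal (R n t x) * hatT^[k] (H t) x ∂μ)
            ≤ ENNReal.ofReal B *
              ∫⁻ x in Y, ENNReal.ofReal (R (n + k) t x) * H t x ∂μ := by
        intro k hk
        have hkK : k ≤ K := Nat.lt_succ_iff.mp (Finset.mem_range.mp hk)
        rw [← hdual k (H t) (fun x => ENNReal.ofReal (R n t x)) (hHmeas t) (hRm n t)]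
        calc (∫⁻ x, ENNReal.ofReal (R n t (T^[k] x)) * H t x ∂μ)
            ≤ ∫⁻ x, ENNReal.ofReal B * (ENNReal.ofReal (R (n + k) t x) * H t x) ∂μ := by
              refine lintegral_mono_ae ?_
              filter_upwards [hB n k t hkK ht] with x hx
              calc ENNReal.ofReal (R n t (T^[k] x)) * H t x
                  ≤ ENNReal.ofReal (B * R (n + k) t x) * H t x :=
                    mul_le_mul_left (ENNReal.ofReal_le_ofReal hx) _
                _ = ENNReal.ofReal B * (ENNReal.ofReal (R (n + k) t x) * H t x) := by
                    rw [ENNReal.ofReal_mul hB0.le, mul_assoc]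
          _ = ENNReal.ofReal B *
              ∫⁻ x in Y, ENNReal.ofReal (R (n + k) t x) * H t x ∂μ := by
              rw [lintegral_const_mul _ (f := fun x => ENNReal.ofReal (R (n + k) t x) * H t x)
                ((hRm (n + k) t).mul (hHmeas t)),
                hIX (H t) (hHsupp t) (n + k) t]
      calc (∫⁻ x in Y, ENNReal.ofReal (R n t x) ∂μ)
          ≤ _ := step1
        _ = _ := step2
        _ ≤ C0 * ∑ k ∈ Finset.range (K + 1), ENNReal.ofReal B *
            ∫⁻ x in Y, ENNReal.ofReal (R (n + k) t x) * H t x ∂μ := by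
            gcongr with k hk
            exact step3 k hk
    -- exponential factor estimate
    have ha_le : ∀ (n k : ℕ), k ≤ K →
        ENNReal.ofReal (Real.exp (-(n : ℝ) * q / t))
          ≤ E * ENNReal.ofReal (Real.exp (-((n + k : ℕ) : ℝ) * q / t)) := by
      intro n k hkK
      rw [hE_def, ← ENNReal.ofReal_mul (Real.exp_nonneg _), ← Real.exp_add]
      apply ENNReal.ofReal_le_ofReal
      apply Real.exp_le_exp.mpr
      have hkq : (k : ℝ) * q / t ≤ (K : ℝ) * q / t0 := by
        calc (k : ℝ) * q / t ≤ (K : ℝ) * q / t := by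
              gcongr
          _ ≤ (K : ℝ) * q / t0 := by gcongr
      have : -(n : ℝ) * q / t = (k : ℝ) * q / t + (-(((n : ℝ) + (k : ℝ))) * q / t) := by
        field_simp
        ring
      push_cast
      rw [this]
      linarith
    -- combine
    calc S t ≤ ∑' n : ℕ, ENNReal.ofReal (Real.exp (-(n : ℝ) * q / t)) *
          (C0 * ∑ k ∈ Finset.range (K + 1), ENNReal.ofReal B *
            ∫⁻ x in Y, ENNReal.ofReal (R (n + k) t x) * H t x ∂μ) := by
          refine ENNReal.tsum_le_tsum fun n => ?_
          gcongr
          exact hJ n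
      _ = ∑' n : ℕ, ∑ k ∈ Finset.range (K + 1), (C0 * ENNReal.ofReal B) *
            (ENNReal.ofReal (Real.exp (-(n : ℝ) * q / t)) *
              ∫⁻ x in Y, ENNReal.ofReal (R (n + k) t x) * H t x ∂μ) := by
          refine tsum_congr fun n => ?_
          rw [Finset.mul_sum, Finset.mul_sum]
          exact Finset.sum_congr rfl fun k _ => by ring
      _ ≤ ∑' n : ℕ, ∑ k ∈ Finset.range (K + 1), (C0 * ENNReal.ofReal B * E) *
            (ENNReal.ofReal (Real.exp (-((n + k : ℕ) : ℝ) * q / t)) *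
              ∫⁻ x in Y, ENNReal.ofReal (R (n + k) t x) * H t x ∂μ) := by
          refine ENNReal.tsum_le_tsum fun n => ?_
          refine Finset.sum_le_sum fun k hk => ?_
          have hkK : k ≤ K := Nat.lt_succ_iff.mp (Finset.mem_range.mp hk)
          calc (C0 * ENNReal.ofReal B) *
              (ENNReal.ofReal (Real.exp (-(n : ℝ) * q / t)) *
                ∫⁻ x in Y, ENNReal.ofReal (R (n + k) t x) * H t x ∂μ)
              ≤ (C0 * ENNReal.ofReal B) *
                ((E * ENNReal.ofReal (Real.exp (-((n + k : ℕ) : ℝ) * q / t))) *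
                  ∫⁻ x in Y, ENNReal.ofReal (R (n + k) t x) * H t x ∂μ) := by
                gcongr
                exact ha_le n k hkK
            _ = _ := by ring
      _ = ∑ k ∈ Finset.range (K + 1), (C0 * ENNReal.ofReal B * E) *
            ∑' n : ℕ, (ENNReal.ofReal (Real.exp (-((n + k : ℕ) : ℝ) * q / t)) *
              ∫⁻ x in Y, ENNReal.ofReal (R (n + k) t x) * H t x ∂μ) := by
          rw [Summable.tsum_finsetSum fun k _ => ENNReal.summable]
          exact Finset.sum_congr rfl fun k _ => ENNReal.tsum_mul_left
      _ ≤ ∑ k ∈ Finset.range (K + 1), (C0 * ENNReal.ofReal B * E) * A (H t) t := by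
          refine Finset.sum_le_sum fun k _ => ?_
          gcongr
          exact ENNReal.tsum_comp_le_tsum_of_injective (add_left_injective k)
            (fun m => ENNReal.ofReal (Real.exp (-(m : ℝ) * q / t)) *
              ∫⁻ x in Y, ENNReal.ofReal (R m t x) * H t x ∂μ)
      _ = (C0 * ENNReal.ofReal B * E * (K + 1 : ℕ)) * A (H t) t := by
          rw [Finset.sum_const, Finset.card_range, nsmul_eq_mul]
          ring
      _ ≤ C2 * A (H t) t := by
          rw [hC2_def]
          gcongr
          exact le_self_add
  -- main argument
  rw [ENNReal.tendsto_nhds ENNReal.one_ne_top]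
  intro δ hδ
  set m : ℝ≥0∞ := min δ 1 with hm_def
  have hm0 : m ≠ 0 := (lt_min hδ zero_lt_one).ne'
  have hmδ : m ≤ δ := min_le_left _ _
  have hm1 : m ≤ 1 := min_le_right _ _
  set ε : ℝ≥0∞ := m / 2 / C2 with hε_def
  have hε0 : 0 < ε := by
    refine ENNReal.div_pos ?_ hC2top
    simp [ENNReal.div_eq_zero_iff, hm0]
  have hεC2 : ε * C2 = m / 2 := ENNReal.div_mul_cancel hC2zero hC2top
  obtain ⟨MH, hMHtop, hMH⟩ := hHlimbd
  filter_upwards [hHconv ε hε0, eventually_ge_atTop t0, eventually_ge_atTop (1 : ℝ)]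
    with t hconv htt0 ht1
  have htpos : (0 : ℝ) < t := lt_of_lt_of_le one_pos ht1
  obtain ⟨Mt, hMttop, hMt⟩ := hHbd t
  have hFt_top : A (H t) t ≠ ⊤ := hAtop (H t) Mt hMttop hMt t htpos
  have hFH_top : A Hlim t ≠ ⊤ := hAtop Hlim MH hMHtop hMH t htpos
  have hStC2 : S t ≤ C2 * A (H t) t := hsweepA t htt0
  have hFt0 : A (H t) t ≠ 0 := by
    intro h
    apply hS0 t
    rw [h, mul_zero] at hStC2
    exact le_antisymm hStC2 zero_le 
  have hup : A (H t) t ≤ A Hlim t + ε * S t :=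
    hAcomp (H t) Hlim hHlimmeas ε t ((hconv.mono) fun x hx => hx.1)
  have hdown : A Hlim t ≤ A (H t) t + ε * S t :=
    hAcomp Hlim (H t) (hHmeas t) ε t ((hconv.mono) fun x hx => hx.2)
  have hεS : ε * S t ≤ (m / 2) * A (H t) t := by
    calc ε * S t ≤ ε * (C2 * A (H t) t) := by gcongr
      _ = (ε * C2) * A (H t) t := by ring
      _ = (m / 2) * A (H t) t := by rw [hεC2]
  -- A (H t) t ≤ 2 * A Hlim t
  have hhalf : A (H t) t / 2 ≤ A Hlim t := by
    have h1 : A (H t) t ≤ A Hlim t + A (H t) t / 2 := by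
      refine hup.trans ?_
      gcongr
      calc ε * S t ≤ (m / 2) * A (H t) t := hεS
        _ ≤ (1 / 2) * A (H t) t := by
            gcongr
        _ = A (H t) t / 2 := by
            rw [one_div, ← ENNReal.div_eq_inv_mul]
    calc A (H t) t / 2 = A (H t) t - A (H t) t / 2 := (ENNReal.sub_half hFt_top).symm
      _ ≤ A Hlim t := tsub_le_iff_right.mpr h1
  have hFH0 : A Hlim t ≠ 0 := by
    intro h
    rw [h] at hhalf
    apply hFt0
    have := le_antisymm hhalf zero_le
    rwa [ENNReal.div_eq_zero_iff, or_iff_left (by norm_num : (2:ℝ≥0∞) ≠ ⊤)] at this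
  have hFt2 : A (H t) t ≤ A Hlim t * 2 :=
    (ENNReal.div_le_iff (by norm_num) (by norm_num)).mp hhalf
  have hεSm : ε * S t ≤ m * A Hlim t := by
    calc ε * S t ≤ (m / 2) * A (H t) t := hεS
      _ ≤ (m / 2) * (A Hlim t * 2) := by gcongr
      _ = (m / 2 * 2) * A Hlim t := by ring
      _ = m * A Hlim t := by
          rw [ENNReal.div_mul_cancel (by norm_num) (by norm_num)]
  constructor
  · -- 1 - δ ≤ ratio
    rw [ENNReal.le_div_iff_mul_le (Or.inl hFH0) (Or.inl hFH_top)]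
    calc (1 - δ) * A Hlim t ≤ (1 - m) * A Hlim t := by
          gcongr
      _ = A Hlim t - m * A Hlim t := by
          rw [ENNReal.sub_mul fun _ _ => hFH_top, one_mul]
      _ ≤ A (H t) t := tsub_le_iff_right.mpr (hdown.trans (by gcongr))
  · -- ratio ≤ 1 + δ
    rw [ENNReal.div_le_iff hFH0 hFH_top]
    calc A (H t) t ≤ A Hlim t + ε * S t := hup
      _ ≤ A Hlim t + m * A Hlim t := by gcongr
      _ = (1 + m) * A Hlim t := by ring
      _ ≤ (1 + δ) * A Hlim t := by gcongr
end

section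
/- Let $T$ be a CEMPT on an infinite $\sigma$-finite measure space with reference set $Y$ of finite positive measure. Let $\alpha\in(0,1)$ and $\{c(n)\}_{n\ge0}$ be a non-increasing $(0,1]$-valued sequence with $c(0)=1$ and $c(n)\to0$. Then there exists a $\mu$-probability density function $G$ such that $\limsup_{n\to\infty} c(n)^{-\alpha}\,\mu_G(Z_n^Y/n\le c(n))=\infty$, where $\mu_G(A)=\int_A G\,d\mu$ and $Z_n^Y(x)=\max\{k\le n:T^kx\in Y\}$ (with $\max\emptyset=0$). -/
open MeasureTheory Filter Real Set
open scoped Topology ENNReal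

/-- For any CEMPT and any prescribed decay `c(n)`, there is a probability density `G`
for which `c(n)^{-α} μ_G(Z_n^Y/n ≤ c(n))` has `limsup = ∞`. -/
theorem stmt11 {X : Type*} [MeasurableSpace X] {μ : Measure X} [SigmaFinite μ]
    {T : X → X} (hcons : Conservative T μ) (herg : Ergodic T μ)
    (hinf : μ Set.univ = ⊤) {Y : Set X} (hYm : MeasurableSet Y)
    (hY0 : 0 < μ Y) (hY1 : μ Y < ⊤)
    (α : ℝ) (hα : α ∈ Set.Ioo (0:ℝ) 1)
    (c : ℕ → ℝ) (hcanti : Antitone c) (hc0 : c 0 = 1)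
    (hcmem : ∀ n, c n ∈ Set.Ioc (0:ℝ) 1) (hctend : Tendsto c atTop (𝓝 0)) :
    ∃ G : X → ℝ≥0∞, Measurable G ∧ (∫⁻ x, G x ∂μ) = 1 ∧
      Filter.atTop.limsup (fun n : ℕ =>
        (ENNReal.ofReal ((c n) ^ α))⁻¹ *
          ∫⁻ x in {x | (lastVisit T Y n x : ℝ) ≤ c n * n}, G x ∂μ) = ⊤ := by
  classical
  obtain ⟨hα0, hα1⟩ := hα
  have hT : Measurable T := herg.toMeasurePreserving.measurable
  have hTk : ∀ k : ℕ, Measurable (T^[k]) := fun k => hT.iterate k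
  -- the sets S n = {x ∈ Y : no return to Y within time n}
  set S : ℕ → Set X := fun n => Y ∩ ⋂ k ∈ Finset.Icc 1 n, T^[k] ⁻¹' Yᶜ with hSdef
  have hSmem : ∀ n x, x ∈ S n ↔ x ∈ Y ∧ ∀ k, 1 ≤ k → k ≤ n → T^[k] x ∉ Y := by
    intro n x
    simp only [hSdef, Set.mem_inter_iff, Set.mem_iInter, Finset.mem_Icc, Set.mem_preimage,
      Set.mem_compl_iff, and_imp]
  have hSm : ∀ n, MeasurableSet (S n) := fun n =>
    hYm.inter (MeasurableSet.biInter (Finset.Icc 1 n).countable_toSet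
      (fun k _ => (hTk k) hYm.compl))
  have hSsubY : ∀ n, S n ⊆ Y := fun n => Set.inter_subset_left
  have hSfin : ∀ n, μ (S n) ≠ ⊤ := fun n =>
    (lt_of_le_of_lt (measure_mono (hSsubY n)) hY1).ne
  have hSanti : Antitone S := by
    intro a b hab x hx
    rw [hSmem] at hx ⊢
    exact ⟨hx.1, fun k h1 h2 => hx.2 k h1 (h2.trans hab)⟩
  have hS0 : S 0 = Y := by
    ext x; rw [hSmem]
    constructor
    · exact fun h => h.1
    · exact fun h => ⟨h, fun k h1 h2 => by omega⟩
  -- the sets H m = {x : first visit to Y at time m}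
  set H : ℕ → Set X := fun m => T^[m] ⁻¹' Y ∩ ⋂ j ∈ Finset.range m, T^[j] ⁻¹' Yᶜ with hHdef
  have hHmem : ∀ m x, x ∈ H m ↔ T^[m] x ∈ Y ∧ ∀ j, j < m → T^[j] x ∉ Y := by
    intro m x
    simp only [hHdef, Set.mem_inter_iff, Set.mem_iInter, Finset.mem_range, Set.mem_preimage,
      Set.mem_compl_iff]
  have hHm : ∀ m, MeasurableSet (H m) := fun m =>
    ((hTk m) hYm).inter (MeasurableSet.biInter (Finset.range m).countable_toSet
      (fun j _ => (hTk j) hYm.compl))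
  have hH0 : H 0 = Y := by
    ext x; rw [hHmem]; simp
  have hHsucc : ∀ m, H (m+1) = T ⁻¹' (H m) \ Y := by
    intro m; ext x
    rw [Set.mem_diff, Set.mem_preimage, hHmem, hHmem]
    constructor
    · rintro ⟨h1, h2⟩
      refine ⟨⟨?_, fun j hj => ?_⟩, ?_⟩
      · rwa [← Function.iterate_succ_apply]
      · rw [← Function.iterate_succ_apply]; exact h2 (j+1) (by omega)
      · simpa using h2 0 (by omega)
    · rintro ⟨⟨h1, h2⟩, h3⟩
      refine ⟨by rwa [Function.iterate_succ_apply], fun j hj => ?_⟩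
      match j with
      | 0 => simpa using h3
      | Nat.succ j => rw [Function.iterate_succ_apply]; exact h2 j (by omega)
  have hSdiff : ∀ m, S m \ S (m+1) = Y ∩ T ⁻¹' (H m) := by
    intro m; ext x
    simp only [Set.mem_diff, Set.mem_inter_iff, Set.mem_preimage, hSmem, hHmem]
    constructor
    · rintro ⟨⟨hxY, h2⟩, h3⟩
      have hk : ∃ k, 1 ≤ k ∧ k ≤ m+1 ∧ T^[k] x ∈ Y := by
        by_contra hc
        push_neg at hc
        exact h3 ⟨hxY, fun k h1 h2' => hc k h1 h2'⟩
      obtain ⟨k, hk1, hk2, hk3⟩ := hk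
      have hke : k = m+1 := by
        by_contra h
        exact h2 k hk1 (by omega) hk3
      subst hke
      refine ⟨hxY, by rwa [← Function.iterate_succ_apply], fun j hj => ?_⟩
      rw [← Function.iterate_succ_apply]
      exact h2 (j+1) (by omega) (by omega)
    · rintro ⟨hxY, hTm, hj⟩
      refine ⟨⟨hxY, fun k h1 h2 => ?_⟩, fun hall => ?_⟩
      · match k with
        | Nat.succ i =>
          rw [Function.iterate_succ_apply]
          exact hj i (by omega)
      · refine hall.2 (m+1) (by omega) le_rfl ?_
        rwa [Function.iterate_succ_apply]
  -- μ (H m) = μ (S m)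
  have hmeasH : ∀ m, μ (H m) = μ (S m) := by
    intro m; induction m with
    | zero => rw [hH0, hS0]
    | succ m ih =>
      have e1 : μ (T ⁻¹' (H m)) = μ (H m) :=
        herg.toMeasurePreserving.measure_preimage (hHm m).nullMeasurableSet
      have e2 : μ (T ⁻¹' (H m) ∩ Y) + μ (T ⁻¹' (H m) \ Y) = μ (T ⁻¹' (H m)) :=
        measure_inter_add_diff _ hYm
      have e3 : μ (S m ∩ S (m+1)) + μ (S m \ S (m+1)) = μ (S m) :=
        measure_inter_add_diff _ (hSm (m+1))
      have e4 : S m ∩ S (m+1) = S (m+1) := Set.inter_eq_right.2 (hSanti (Nat.le_succ m))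
      have e5 : T ⁻¹' (H m) ∩ Y = S m \ S (m+1) := by
        rw [hSdiff]; exact Set.inter_comm _ _
      have hfin : μ (S m \ S (m+1)) ≠ ⊤ :=
        (lt_of_le_of_lt (measure_mono (fun x hx => (hSsubY m) hx.1)) hY1).ne
      rw [hHsucc m]
      have hfin' : μ (T ⁻¹' (H m) ∩ Y) ≠ ⊤ := by rw [e5]; exact hfin
      have key : μ (T ⁻¹' (H m) ∩ Y) + μ (T ⁻¹' (H m) \ Y)
          = μ (T ⁻¹' (H m) ∩ Y) + μ (S (m+1)) := by
        calc μ (T ⁻¹' (H m) ∩ Y) + μ (T ⁻¹' (H m) \ Y) = μ (T ⁻¹' (H m)) := e2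
        _ = μ (H m) := e1
        _ = μ (S m) := ih
        _ = μ (S m ∩ S (m+1)) + μ (S m \ S (m+1)) := e3.symm
        _ = μ (S (m+1)) + μ (T ⁻¹' (H m) ∩ Y) := by rw [e4, e5]
        _ = μ (T ⁻¹' (H m) ∩ Y) + μ (S (m+1)) := add_comm _ _
      exact (ENNReal.add_right_inj hfin').1 key
  -- a.e. every point visits Y
  have hmeetY : ∀ᵐ x ∂μ, ∃ n, T^[n] x ∈ Y := by
    set U : Set X := ⋂ m : ℕ, ⋃ n : ℕ, ⋃ _ : m ≤ n, T^[n] ⁻¹' Y with hUdef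
    have hUmem : ∀ x, x ∈ U ↔ ∀ m, ∃ n, m ≤ n ∧ T^[n] x ∈ Y := by
      intro x
      simp only [hUdef, Set.mem_iInter, Set.mem_iUnion, Set.mem_preimage, exists_prop]
    have hUm : MeasurableSet U :=
      MeasurableSet.iInter fun m => MeasurableSet.iUnion fun n =>
        MeasurableSet.iUnion fun _ => (hTk n) hYm
    have hUinv : T ⁻¹' U = U := by
      ext x
      rw [Set.mem_preimage, hUmem, hUmem]
      constructor
      · intro h m
        obtain ⟨n, hn, hny⟩ := h m
        exact ⟨n+1, by omega, by rw [Function.iterate_succ_apply]; exact hny⟩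
      · intro h m
        obtain ⟨n, hn, hny⟩ := h (m+1)
        obtain ⟨p, rfl⟩ : ∃ p, n = p + 1 := ⟨n - 1, by omega⟩
        refine ⟨p, by omega, ?_⟩
        rw [← Function.iterate_succ_apply]
        exact hny
    have hcY : ∀ᵐ x ∂μ, x ∈ Y → x ∈ U := by
      filter_upwards [hcons.ae_mem_imp_frequently_image_mem hYm.nullMeasurableSet] with x hx hxY
      rw [hUmem]
      intro m
      obtain ⟨n, hn, h⟩ := (frequently_atTop.1 (hx hxY)) m
      exact ⟨n, hn, h⟩
    have hYU : μ (Y \ U) = 0 := by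
      have := hcY
      rw [ae_iff] at this
      convert this using 2
      ext x
      simp [Set.mem_diff, Classical.not_imp]
    have hU0 : μ Uᶜ = 0 := by
      rcases herg.measure_self_or_compl_eq_zero hUm hUinv with h | h
      · exfalso
        have hle : μ Y ≤ μ U + μ (Y \ U) := by
          refine le_trans (measure_mono ?_) (measure_union_le _ _)
          intro x hx
          by_cases hxU : x ∈ U
          · exact Or.inl hxU
          · exact Or.inr ⟨hx, hxU⟩
        rw [h, hYU, add_zero] at hle
        exact absurd (le_antisymm hle (zero_le)) hY0.ne'
      · exact h
    have : ∀ᵐ x ∂μ, x ∈ U := by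
      rw [ae_iff]
      exact hU0
    filter_upwards [this] with x hx
    obtain ⟨n, _, hn⟩ := (hUmem x).1 hx 0
    exact ⟨n, hn⟩
  -- μ (S n) > 0 for every n
  have hSpos : ∀ n, 0 < μ (S n) := by
    intro n
    by_contra h
    push_neg at h
    have hn0 : μ (S n) = 0 := le_antisymm h (zero_le)
    have hSz : ∀ m, n ≤ m → μ (S m) = 0 := fun m hm =>
      le_antisymm (hn0 ▸ measure_mono (hSanti hm)) (zero_le)
    have hcov : ∀ᵐ x ∂μ, x ∈ ⋃ m, H m := by
      filter_upwards [hmeetY] with x hx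
      have hfind : ∃ m, T^[m] x ∈ Y := hx
      refine Set.mem_iUnion.2 ⟨Nat.find hfind, (hHmem _ _).2 ⟨Nat.find_spec hfind, ?_⟩⟩
      intro j hj
      exact Nat.find_min hfind hj
    have hcov0 : μ (⋃ m, H m)ᶜ = 0 := by
      rw [ae_iff] at hcov
      exact hcov
    have htop : (⊤ : ℝ≥0∞) ≤ ∑' m, μ (S m) := by
      calc (⊤ : ℝ≥0∞) = μ Set.univ := hinf.symm
      _ ≤ μ (⋃ m, H m) + μ (⋃ m, H m)ᶜ := by
          refine le_trans (measure_mono ?_) (measure_union_le _ _)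
          intro x _
          by_cases hx : x ∈ ⋃ m, H m
          · exact Or.inl hx
          · exact Or.inr hx
      _ = μ (⋃ m, H m) := by rw [hcov0, add_zero]
      _ ≤ ∑' m, μ (H m) := measure_iUnion_le _
      _ = ∑' m, μ (S m) := by simp_rw [hmeasH]
    have hsum : ∑' m, μ (S m) = ∑ m ∈ Finset.range (n+1), μ (S m) := by
      refine tsum_eq_sum (fun m hm => hSz m ?_)
      simp only [Finset.mem_range, not_lt] at hm
      omega
    rw [hsum] at htop
    have hlt : ∑ m ∈ Finset.range (n+1), μ (S m) < ⊤ :=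
      ENNReal.sum_lt_top.2 fun m _ => lt_of_le_of_lt (measure_mono (hSsubY m)) hY1
    exact absurd htop (not_le.2 hlt)
  -- μ (S n) → 0
  have htend : Tendsto (fun n => μ (S n)) atTop (𝓝 0) := by
    have h0 : μ (⋂ n, S n) = 0 := by
      have hbad : ∀ᵐ x ∂μ, ¬ x ∈ ⋂ n, S n := by
        filter_upwards [hcons.ae_mem_imp_frequently_image_mem hYm.nullMeasurableSet] with x hx hmem
        have hxY : x ∈ Y := (hSsubY 0) (Set.mem_iInter.1 hmem 0)
        obtain ⟨n, hn1, hnY⟩ := frequently_atTop.1 (hx hxY) 1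
        exact ((hSmem n x).1 (Set.mem_iInter.1 hmem n)).2 n hn1 le_rfl hnY
      rw [ae_iff] at hbad
      simp only [not_not, Set.setOf_mem_eq] at hbad
      exact hbad
    have := MeasureTheory.tendsto_measure_iInter_atTop
      (fun n => (hSm n).nullMeasurableSet) hSanti ⟨0, hSfin 0⟩
    rw [h0] at this
    exact this
  -- c n ^ α → 0
  have hcα : Tendsto (fun n => c n ^ α) atTop (𝓝 0) := by
    have hcont : ContinuousAt (fun x : ℝ => x ^ α) 0 :=
      Real.continuousAt_rpow_const 0 α (Or.inr hα0.le)
    have h := hcont.tendsto.comp hctend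
    rw [Real.zero_rpow hα0.ne'] at h
    exact h
  -- the subsequence
  have step : ∀ (k m : ℕ), ∃ n : ℕ, m < n ∧ μ (S n) < μ (S m) ∧ c n ^ α ≤ (1/4:ℝ)^k := by
    intro k m
    have h1 : ∀ᶠ n in atTop, μ (S n) < μ (S m) :=
      htend.eventually_lt_const (hSpos m)
    have h2 : ∀ᶠ n in atTop, c n ^ α < (1/4:ℝ)^k :=
      hcα.eventually_lt_const (by positivity)
    have h3 : ∀ᶠ n in atTop, m < n := eventually_gt_atTop m
    obtain ⟨n, ⟨hn3, hn1⟩, hn2⟩ := ((h3.and h1).and h2).exists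
    exact ⟨n, hn3, hn1, hn2.le⟩
  choose g hg1 hg2 hg3 using step
  set f : ℕ → ℕ := fun k => Nat.rec (g 1 0) (fun k fk => g (k+2) fk) k with hfdef
  have hfsucc : ∀ k, f (k+1) = g (k+2) (f k) := fun k => rfl
  have hf1 : ∀ k, f k < f (k+1) := fun k => hg1 (k+2) (f k)
  have hf2 : ∀ k, μ (S (f (k+1))) < μ (S (f k)) := fun k => hg2 (k+2) (f k)
  have hf3 : ∀ k, c (f k) ^ α ≤ (1/4:ℝ)^(k+1) := by
    intro k
    cases k with
    | zero => exact hg3 1 0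
    | succ k => exact hg3 (k+2) (f k)
  have hfmono : StrictMono f := strictMono_nat_of_lt_succ hf1
  -- the annuli and the density
  set A : ℕ → Set X := fun k => S (f k) \ S (f (k+1)) with hAdef
  have hAm : ∀ k, MeasurableSet (A k) := fun k => (hSm _).diff (hSm _)
  have hApos : ∀ k, 0 < μ (A k) := by
    intro k
    by_contra h
    push_neg at h
    have h0 : μ (A k) = 0 := le_antisymm h (zero_le)
    have hle : μ (S (f k)) ≤ μ (S (f (k+1))) := by
      calc μ (S (f k)) ≤ μ (S (f (k+1)) ∪ A k) := by
            refine measure_mono (fun x hx => ?_)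
            by_cases hx2 : x ∈ S (f (k+1))
            · exact Or.inl hx2
            · exact Or.inr ⟨hx, hx2⟩
      _ ≤ μ (S (f (k+1))) + μ (A k) := measure_union_le _ _
      _ = μ (S (f (k+1))) := by rw [h0, add_zero]
    exact absurd hle (not_le.2 (hf2 k))
  have hAfin : ∀ k, μ (A k) ≠ ⊤ := fun k =>
    (lt_of_le_of_lt (measure_mono (fun x hx => hSsubY _ hx.1)) hY1).ne
  set w : ℕ → ℝ≥0∞ := fun k => (2:ℝ≥0∞)⁻¹ ^ (k+1) * (μ (A k))⁻¹ with hwdef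
  refine ⟨fun x => ∑' k, (A k).indicator (fun _ => w k) x,
    Measurable.ennreal_tsum (fun k => measurable_const.indicator (hAm k)), ?_, ?_⟩
  · -- total mass 1
    rw [lintegral_tsum (fun k => (measurable_const.indicator (hAm k)).aemeasurable)]
    have hterm : ∀ k : ℕ, ∫⁻ x, (A k).indicator (fun _ => w k) x ∂μ = (2:ℝ≥0∞)⁻¹ ^ (k+1) := by
      intro k
      rw [lintegral_indicator_const (hAm k), hwdef]
      rw [mul_assoc, ENNReal.inv_mul_cancel (hApos k).ne' (hAfin k), mul_one]
    simp_rw [hterm, pow_succ']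
    rw [ENNReal.tsum_mul_left, ENNReal.tsum_geometric, ENNReal.one_sub_inv_two, inv_inv]
    exact ENNReal.inv_mul_cancel two_ne_zero (by norm_num)
  · -- limsup = ⊤
    have hlast : ∀ n, ∀ x ∈ S n, lastVisit T Y n x = 0 := by
      intro n x hx
      have hx' := (hSmem n x).1 hx
      have hset : {j | j ≤ n ∧ T^[j] x ∈ Y} = {0} := by
        ext j
        simp only [Set.mem_setOf_eq, Set.mem_singleton_iff]
        constructor
        · rintro ⟨hj, hjY⟩
          by_contra h
          exact hx'.2 j (by omega) hj hjY
        · rintro rfl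
          exact ⟨Nat.zero_le n, by simpa using hx'.1⟩
      rw [lastVisit, hset, csSup_singleton]
    have hbound : ∀ k, (2:ℝ≥0∞)^(k+1) ≤
        (ENNReal.ofReal ((c (f k)) ^ α))⁻¹ *
          ∫⁻ x in {x | (lastVisit T Y (f k) x : ℝ) ≤ c (f k) * (f k)},
            ∑' j, (A j).indicator (fun _ => w j) x ∂μ := by
      intro k
      have hsub : A k ⊆ {x | (lastVisit T Y (f k) x : ℝ) ≤ c (f k) * (f k)} := by
        intro x hx
        have h0 := hlast (f k) x hx.1
        simp only [Set.mem_setOf_eq, h0, Nat.cast_zero]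
        exact mul_nonneg ((hcmem _).1.le) (Nat.cast_nonneg _)
      have hint : (2:ℝ≥0∞)⁻¹^(k+1) ≤
          ∫⁻ x in {x | (lastVisit T Y (f k) x : ℝ) ≤ c (f k) * (f k)},
            ∑' j, (A j).indicator (fun _ => w j) x ∂μ := by
        have h1 : ∫⁻ x in {x | (lastVisit T Y (f k) x : ℝ) ≤ c (f k) * (f k)},
            (A k).indicator (fun _ => w k) x ∂μ ≤
            ∫⁻ x in {x | (lastVisit T Y (f k) x : ℝ) ≤ c (f k) * (f k)},
            ∑' j, (A j).indicator (fun _ => w j) x ∂μ :=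
          lintegral_mono fun x => ENNReal.le_tsum k
        refine le_trans ?_ h1
        rw [lintegral_indicator_const (hAm k),
          Measure.restrict_apply (hAm k), Set.inter_eq_left.2 hsub, hwdef,
          mul_assoc, ENNReal.inv_mul_cancel (hApos k).ne' (hAfin k), mul_one]
      have hof : (4:ℝ≥0∞)^(k+1) ≤ (ENNReal.ofReal ((c (f k)) ^ α))⁻¹ := by
        have h1 : ENNReal.ofReal ((c (f k)) ^ α) ≤ ENNReal.ofReal ((1/4:ℝ)^(k+1)) :=
          ENNReal.ofReal_le_ofReal (hf3 k)
        have h2 : ENNReal.ofReal ((1/4:ℝ)^(k+1)) = ((4:ℝ≥0∞)^(k+1))⁻¹ := by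
          have h3 : ENNReal.ofReal (1/4:ℝ) = (4:ℝ≥0∞)⁻¹ := by
            rw [one_div, ENNReal.ofReal_inv_of_pos (by norm_num : (0:ℝ) < 4)]
            norm_num
          rw [ENNReal.ofReal_pow (by norm_num : (0:ℝ) ≤ 1/4), h3]
          first
          | exact ENNReal.inv_pow
          | exact ENNReal.inv_pow.symm
          | simp
        rw [h2] at h1
        calc (4:ℝ≥0∞)^(k+1) = (((4:ℝ≥0∞)^(k+1))⁻¹)⁻¹ := (inv_inv _).symm
        _ ≤ _ := ENNReal.inv_le_inv.2 h1
      calc (2:ℝ≥0∞)^(k+1) = (4:ℝ≥0∞)^(k+1) * (2:ℝ≥0∞)⁻¹^(k+1) := by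
            rw [← mul_pow]
            congr 1
            rw [show (4:ℝ≥0∞) = 2 * 2 by norm_num, mul_assoc,
              ENNReal.mul_inv_cancel two_ne_zero (by norm_num), mul_one]
      _ ≤ _ := mul_le_mul' hof hint
    rw [Filter.limsup_eq_iInf_iSup_of_nat]
    refine iInf_eq_top.2 fun n => ?_
    by_contra hne
    obtain ⟨M, hM⟩ := ENNReal.exists_nat_gt hne
    set k := max M n with hk
    have hfk : n ≤ f k := le_trans (le_max_right M n) (hfmono.le_apply)
    have hle : (ENNReal.ofReal ((c (f k)) ^ α))⁻¹ *
          ∫⁻ x in {x | (lastVisit T Y (f k) x : ℝ) ≤ c (f k) * (f k)},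
            ∑' j, (A j).indicator (fun _ => w j) x ∂μ ≤
        ⨆ i, ⨆ (_ : i ≥ n), (ENNReal.ofReal ((c i) ^ α))⁻¹ *
          ∫⁻ x in {x | (lastVisit T Y i x : ℝ) ≤ c i * i},
            ∑' j, (A j).indicator (fun _ => w j) x ∂μ :=
      le_iSup₂ (f := fun i (_ : i ≥ n) => (ENNReal.ofReal ((c i) ^ α))⁻¹ *
          ∫⁻ x in {x | (lastVisit T Y i x : ℝ) ≤ c i * i},
            ∑' j, (A j).indicator (fun _ => w j) x ∂μ) (f k) hfk
    have hMk : (M:ℝ≥0∞) ≤ (2:ℝ≥0∞)^(k+1) := by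
      have h1 : (M:ℕ) ≤ 2^(k+1) := le_trans (le_trans (le_max_left M n) (Nat.lt_two_pow_self (n := k)).le)
        (Nat.pow_le_pow_right (by norm_num) (Nat.le_succ k))
      calc (M:ℝ≥0∞) ≤ ((2^(k+1) : ℕ) : ℝ≥0∞) := Nat.cast_le.2 h1
      _ = (2:ℝ≥0∞)^(k+1) := by push_cast; ring
    have : (M:ℝ≥0∞) ≤ ⨆ i, ⨆ (_ : i ≥ n), (ENNReal.ofReal ((c i) ^ α))⁻¹ *
          ∫⁻ x in {x | (lastVisit T Y i x : ℝ) ≤ c i * i},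
            ∑' j, (A j).indicator (fun _ => w j) x ∂μ :=
      le_trans hMk (le_trans (hbound k) hle)
    exact absurd this (not_le.2 hM)
end
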